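/- arXiv:2003.06269 — 5 statements merged into one kernel-verified Lean document; each statement's English description precedes it below -/
import Mathlib

section
/- For all N ≥ 2, the number of derangements of an N-element set equals the floor of N!/e + 1/2, i.e., the nearest integer to N!/e. -/
/-- `numDerangementsOf N` is the number of fixed-point-free permutations
(derangements) of an `N`-element set. -/
noncomputable def numDerangementsOf (N : ℕ) : ℕ :=
  Nat.card {σ : Equiv.Perm (Fin N) // ∀ i, σ i ≠ i}

lemma numDerangementsOf_eq (N : ℕ) : numDerangementsOf N = numDerangements N := by
  rw [numDerangementsOf, Nat.card_eq_fintype_card,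
    ← card_derangements_fin_eq_numDerangements (n := N)]
  exact Fintype.card_congr (Equiv.subtypeEquivRight (fun _ => Iff.rfl))

lemma numDerangements_real (n : ℕ) :
    (numDerangements n : ℝ) =
      (n.factorial : ℝ) * ∑ k ∈ Finset.range (n + 1), (-1 : ℝ) ^ k / k.factorial := by
  have key : (numDerangements n : ℝ) / n.factorial
      = ∑ k ∈ Finset.range (n + 1), (-1 : ℝ) ^ k / k.factorial := by
    rw [← Int.cast_natCast, numDerangements_sum]
    push_cast
    rw [Finset.sum_div]
    refine Finset.sum_congr (refl _) ?_
    intro k hk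
    have h_le : k ≤ n := Finset.mem_range_succ_iff.mp hk
    rw [Nat.ascFactorial_eq_div, add_tsub_cancel_of_le h_le]
    push_cast [Nat.factorial_dvd_factorial h_le]
    field_simp [Nat.factorial_ne_zero]
  have hfac : (n.factorial : ℝ) ≠ 0 := by positivity
  field_simp at key
  linarith [key]

theorem derangements_floor_formula (N : ℕ) (hN : 2 ≤ N) :
    (numDerangementsOf N : ℤ) = ⌊(Nat.factorial N : ℝ) / Real.exp 1 + 1 / 2⌋ := by
  have hx : |(-1 : ℝ)| ≤ 1 := by norm_num
  have hb := Real.exp_bound hx (n := N + 1) (Nat.succ_pos N)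
  have hD : (numDerangements N : ℝ) =
      (N.factorial : ℝ) * ∑ k ∈ Finset.range (N + 1), (-1 : ℝ) ^ k / k.factorial :=
    numDerangements_real N
  -- bound the remainder
  have hfacpos : (0 : ℝ) < N.factorial := by positivity
  have habs : |(N.factorial : ℝ) / Real.exp 1 - (numDerangements N : ℝ)| ≤
      (N.factorial : ℝ) * ((N + 2) / ((N + 1).factorial * (N + 1))) := by
    have heq : (N.factorial : ℝ) / Real.exp 1 = (N.factorial : ℝ) * Real.exp (-1) := by
      rw [Real.exp_neg]; ring
    rw [hD, heq, ← mul_sub, abs_mul, abs_of_pos hfacpos]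
    apply mul_le_mul_of_nonneg_left _ hfacpos.le
    refine le_trans hb (le_of_eq ?_)
    push_cast
    rw [abs_neg, abs_one, one_pow, one_mul]
    ring
  have hbound : (N.factorial : ℝ) * ((N + 2) / ((N + 1).factorial * (N + 1))) < 1 / 2 := by
    rw [Nat.factorial_succ]
    push_cast
    have hcancel : (N.factorial : ℝ) * (((N : ℝ) + 2) / (((N : ℝ) + 1) * N.factorial * ((N : ℝ) + 1)))
        = ((N : ℝ) + 2) / (((N : ℝ) + 1) * ((N : ℝ) + 1)) := by
      field_simp
    rw [hcancel, div_lt_iff₀ (by positivity)]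
    have h2 : (2 : ℝ) ≤ (N : ℝ) := by exact_mod_cast hN
    nlinarith
  have h := abs_lt.mp (habs.trans_lt hbound)
  rw [numDerangementsOf_eq]
  symm
  rw [Int.floor_eq_iff]
  constructor
  · push_cast; linarith [h.2]
  · push_cast; linarith [h.1]
end

section
/- Let P_N denote the number of fixed-point-free permutations of {1,...,N} having at least one 2-cycle. Then P_0 = P_1 = 0, and for all N ≥ 2, P_N = Σ_{k=2}^{N-3} P_k * (N-1)!/k! + D_{N-2} * (N-1), where D_m is the number of derangements of m elements. -/
set_option linter.unusedSectionVars false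
set_option maxHeartbeats 1000000

open Equiv Equiv.Perm Finset List

/-- Number of fixed-point-free permutations of an `N`-element set having at least
one 2-cycle. -/
noncomputable def numPairedDerangements (N : ℕ) : ℕ :=
  Nat.card {σ : Equiv.Perm (Fin N) // (∀ i, σ i ≠ i) ∧ 2 ∈ σ.cycleType}

variable {α β : Type*}

lemma cycleType_permCongr [Fintype α] [DecidableEq α] [Fintype β] [DecidableEq β]
    (e : α ≃ β) (σ : Perm α) : (e.permCongr σ).cycleType = σ.cycleType := by
  have hT : ∀ x : β, (fun _ : β => True) x := fun _ => trivial
  let f : α ≃ {x : β // (fun _ : β => True) x} := e.trans (Equiv.subtypeUnivEquiv hT).symm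
  have h : e.permCongr σ = σ.extendDomain f := by
    ext x
    rw [show (e.permCongr σ) x = e (σ (e.symm x)) from rfl,
      Equiv.Perm.extendDomain_apply_subtype σ f (hT x)]
    simp [f, Equiv.subtypeUnivEquiv]
  rw [h, Equiv.Perm.cycleType_extendDomain]

lemma natCard_paired (α : Type*) [Fintype α] [DecidableEq α] :
    Nat.card {σ : Perm α // (∀ i, σ i ≠ i) ∧ 2 ∈ σ.cycleType}
      = numPairedDerangements (Fintype.card α) := by
  rw [numPairedDerangements]
  apply Nat.card_congr
  refine Equiv.subtypeEquiv (Equiv.permCongr (Fintype.equivFin α)) (fun σ => ?_)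
  set e := Fintype.equivFin α
  constructor
  · rintro ⟨h1, h2⟩
    refine ⟨fun i => ?_, by rwa [cycleType_permCongr]⟩
    simpa using fun hc => h1 (e.symm i) (e.injective (by simpa using hc))
  · rintro ⟨h1, h2⟩
    rw [cycleType_permCongr] at h2
    refine ⟨fun i hc => h1 (e i) ?_, h2⟩
    simp [Equiv.permCongr, hc]
  
lemma natCard_derange (α : Type*) [Fintype α] [DecidableEq α] :
    Nat.card {σ : Perm α // ∀ i, σ i ≠ i}
      = numDerangementsOf (Fintype.card α) := by
  rw [numDerangementsOf]
  apply Nat.card_congr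
  refine Equiv.subtypeEquiv (Equiv.permCongr (Fintype.equivFin α)) (fun σ => ?_)
  set e := Fintype.equivFin α
  constructor
  · intro h1 i
    simpa using fun hc => h1 (e.symm i) (e.injective (by simpa using hc))
  · intro h1 i hc
    exact h1 (e i) (by simp [Equiv.permCongr, hc])




variable {α : Type*} [Fintype α] [DecidableEq α]

lemma toList_eq_of_cycleOf_eq (p q : Perm α) (x : α) (h : p.cycleOf x = q.cycleOf x) :
    p.toList x = q.toList x := by
  have hk : ∀ k : ℕ, (p ^ k) x = (q ^ k) x := fun k => by
    rw [← cycleOf_pow_apply_self p x k, ← cycleOf_pow_apply_self q x k, h]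
  rw [Equiv.Perm.toList, Equiv.Perm.toList, h]
  exact List.ext_getElem (by simp) fun k _ _ => by simp [List.getElem_iterate, Equiv.Perm.iterate_eq_pow, hk k]

section Core
variable {l : List α} (hl : l.Nodup) (hL : 2 ≤ l.length)

lemma disj_formPerm_ofSubtype (τ : Perm {x : α // x ∉ l}) :
    Perm.Disjoint (formPerm l) (Equiv.Perm.ofSubtype τ) := by
  intro x
  by_cases hx : x ∈ l
  · exact Or.inr (Equiv.Perm.ofSubtype_apply_of_not_mem τ (by simpa using hx))
  · exact Or.inl (formPerm_apply_of_notMem hx)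

include hl hL in
lemma cycleType_formPerm' : (formPerm l).cycleType = {l.length} := by
  have h' : ∀ x, l ≠ [x] := by rintro x rfl; simp at hL
  rw [(isCycle_formPerm hl hL).cycleType, support_formPerm_of_nodup l hl h',
    List.toFinset_card_of_nodup hl]

include hl hL in
lemma cycleType_mul (τ : Perm {x : α // x ∉ l}) :
    ((formPerm l) * Equiv.Perm.ofSubtype τ).cycleType = l.length ::ₘ τ.cycleType := by
  rw [Equiv.Perm.Disjoint.cycleType_mul (disj_formPerm_ofSubtype τ), cycleType_formPerm' hl hL,
    Equiv.Perm.cycleType_ofSubtype]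
  rfl
end Core

section Fiber
variable {l : List α} (hl : l.Nodup) (hL : 2 ≤ l.length) {x0 : α} (hx0l : x0 ∈ l)

include hx0l in
lemma inv_lemma {σ : Perm α} (h1 : ∀ i, σ i ≠ i) (hlist : σ.toList x0 = l) :
    ∀ x, (σ x ∉ l) ↔ (x ∉ l) := by
  have hsupp : x0 ∈ σ.support := mem_support.2 (h1 x0)
  have hmem : ∀ x, x ∈ l ↔ σ.SameCycle x0 x := fun x => by
    rw [← hlist, Equiv.Perm.mem_toList_iff]; exact and_iff_left hsupp
  intro x
  rw [not_iff_not, hmem, hmem, Equiv.Perm.sameCycle_apply_right]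

include hl hL hx0l in
lemma decomp {σ : Perm α} (h1 : ∀ i, σ i ≠ i) (hlist : σ.toList x0 = l) :
    formPerm l * Equiv.Perm.ofSubtype (σ.subtypePerm (p := fun x => x ∉ l) (inv_lemma hx0l h1 hlist)) = σ := by
  have hsupp : x0 ∈ σ.support := mem_support.2 (h1 x0)
  have hmem : ∀ x, x ∈ l ↔ σ.SameCycle x0 x := fun x => by
    rw [← hlist, Equiv.Perm.mem_toList_iff]; exact and_iff_left hsupp
  ext x
  by_cases hx : x ∈ l
  · rw [mul_apply, Equiv.Perm.ofSubtype_apply_of_not_mem (σ.subtypePerm (p := fun x => x ∉ l) (inv_lemma hx0l h1 hlist)) (not_not_intro hx)]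
    have : formPerm l = σ.cycleOf x0 := by rw [← hlist, Equiv.Perm.formPerm_toList]
    rw [this]
    exact Equiv.Perm.SameCycle.cycleOf_apply ((hmem x).1 hx)
  · rw [mul_apply, Equiv.Perm.ofSubtype_apply_of_mem (σ.subtypePerm (p := fun x => x ∉ l) (inv_lemma hx0l h1 hlist)) hx, Equiv.Perm.subtypePerm_apply]
    exact formPerm_apply_of_notMem (((inv_lemma hx0l h1 hlist) x).2 hx)

lemma prod_apply_mem (τ : Perm {x : α // x ∉ l}) {x : α} (hx : x ∈ l) :
    (formPerm l * Equiv.Perm.ofSubtype τ) x = formPerm l x := by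
  rw [mul_apply, Equiv.Perm.ofSubtype_apply_of_not_mem τ (not_not_intro hx)]

lemma prod_apply_not_mem (τ : Perm {x : α // x ∉ l}) {x : α} (hx : x ∉ l) :
    (formPerm l * Equiv.Perm.ofSubtype τ) x = (τ ⟨x, hx⟩ : {x : α // x ∉ l}) := by
  rw [mul_apply, Equiv.Perm.ofSubtype_apply_of_mem τ hx]
  exact formPerm_apply_of_notMem (τ ⟨x, hx⟩).2

include hl hL in
lemma prod_derangement (τ : Perm {x : α // x ∉ l}) (hτ : ∀ i, τ i ≠ i) :
    ∀ x, (formPerm l * Equiv.Perm.ofSubtype τ) x ≠ x := by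
  intro x
  by_cases hx : x ∈ l
  · rw [prod_apply_mem τ hx]
    exact (formPerm_apply_mem_ne_self_iff l hl x hx).2 hL
  · rw [prod_apply_not_mem τ hx]
    exact fun hc => hτ ⟨x, hx⟩ (Subtype.ext hc)

include hl hL hx0l in
lemma prod_cycleOf (τ : Perm {x : α // x ∉ l}) :
    (formPerm l * Equiv.Perm.ofSubtype τ).cycleOf x0 = formPerm l := by
  rw [(disj_formPerm_ofSubtype τ).cycleOf_mul_distrib x0,
    (Equiv.Perm.cycleOf_eq_one_iff _).2 (Equiv.Perm.ofSubtype_apply_of_not_mem τ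
      (not_not_intro hx0l)), mul_one]
  exact (isCycle_formPerm hl hL).cycleOf_eq
    ((formPerm_apply_mem_ne_self_iff l hl x0 hx0l).2 hL)

include hl hL in
lemma prod_toList (τ : Perm {x : α // x ∉ l}) (hx0 : l.get ⟨0, by omega⟩ = x0) :
    (formPerm l * Equiv.Perm.ofSubtype τ).toList x0 = l := by
  have hx0l : x0 ∈ l := hx0 ▸ l.get_mem _
  have h1 : (formPerm l).cycleOf x0 = formPerm l :=
    (isCycle_formPerm hl hL).cycleOf_eq ((formPerm_apply_mem_ne_self_iff l hl x0 hx0l).2 hL)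
  rw [toList_eq_of_cycleOf_eq _ (formPerm l) x0 (by rw [prod_cycleOf hl hL hx0l τ, h1])]
  rw [← hx0]
  exact Equiv.Perm.toList_formPerm_nontrivial l hL hl
end Fiber

section FiberCard
variable {l : List α} (hl : l.Nodup) (hL : 2 ≤ l.length) {x0 : α}

include hl hL in
lemma fiber_card (hx0 : l.get ⟨0, by omega⟩ = x0) :
    Nat.card {σ : Perm α // ((∀ i, σ i ≠ i) ∧ 2 ∈ σ.cycleType) ∧ σ.toList x0 = l}
      = Nat.card {τ : Perm {x : α // x ∉ l} //
          (∀ i, τ i ≠ i) ∧ (l.length = 2 ∨ 2 ∈ τ.cycleType)} := by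
  have hx0l : x0 ∈ l := hx0 ▸ l.get_mem _
  apply Nat.card_congr
  refine
    { toFun := fun σp => ⟨σp.1.subtypePerm (p := fun x => x ∉ l) (inv_lemma hx0l σp.2.1.1 σp.2.2), ?_, ?_⟩
      invFun := fun τp => ⟨formPerm l * Equiv.Perm.ofSubtype τp.1,
        ⟨prod_derangement hl hL τp.1 τp.2.1, ?_⟩, prod_toList hl hL τp.1 hx0⟩
      left_inv := ?_
      right_inv := ?_ }
  · exact fun i hc => σp.2.1.1 i.val (by simpa using congrArg Subtype.val hc)
  · have hd := decomp hl hL hx0l σp.2.1.1 σp.2.2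
    have h2 := σp.2.1.2
    rw [← hd, cycleType_mul hl hL] at h2
    rcases Multiset.mem_cons.1 h2 with h | h
    · exact Or.inl h.symm
    · exact Or.inr h
  · rw [cycleType_mul hl hL, Multiset.mem_cons]
    rcases τp.2.2 with h | h
    · exact Or.inl h.symm
    · exact Or.inr h
  · rintro ⟨σ, ⟨h1, h2⟩, hlist⟩
    exact Subtype.ext (decomp hl hL hx0l h1 hlist)
  · rintro ⟨τ, hτ1, hτ2⟩
    refine Subtype.ext (Equiv.ext fun x => ?_)
    obtain ⟨x, hx⟩ := x
    refine Subtype.ext ?_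
    show (formPerm l * Equiv.Perm.ofSubtype τ) x = ((τ ⟨x, hx⟩ : {x : α // x ∉ l}) : α)
    rw [prod_apply_not_mem τ hx]
end FiberCard



-- counting injective 0-avoiding tuples
lemma card_G (N m : ℕ) [NeZero N] :
    ((univ : Finset (Fin m → Fin N)).filter
        (fun g => Function.Injective g ∧ ∀ i, g i ≠ 0)).card = (N - 1).descFactorial m := by
  rw [← Fintype.card_subtype]
  have e : {g : Fin m → Fin N // Function.Injective g ∧ ∀ i, g i ≠ 0}
      ≃ (Fin m ↪ {x : Fin N // x ≠ 0}) :=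
    { toFun := fun gp => ⟨fun i => ⟨gp.1 i, gp.2.2 i⟩,
        fun a b h => gp.2.1 (congrArg Subtype.val h)⟩
      invFun := fun f => ⟨fun i => (f i).val,
        ⟨fun a b h => f.injective (Subtype.ext h), fun i => (f i).2⟩⟩
      left_inv := fun gp => rfl
      right_inv := fun f => by ext i; rfl }
  rw [Fintype.card_congr e, Fintype.card_embedding_eq, Fintype.card_fin]
  congr 1
  rw [Fintype.card_subtype_compl, Fintype.card_fin, Fintype.card_subtype_eq]

-- link lemma
lemma link {N : ℕ} [NeZero N] {L : ℕ} (hL : 2 ≤ L) (g : Fin (L-1) → Fin N)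
    (σ : Equiv.Perm (Fin N)) (h1 : ∀ i, σ i ≠ i) :
    ((σ.cycleOf 0).support.card = L ∧ (fun i : Fin (L-1) => (σ ^ (i.val+1)) 0) = g)
      ↔ σ.toList 0 = 0 :: List.ofFn g := by
  have hsupp : (0 : Fin N) ∈ σ.support := mem_support.2 (h1 0)
  have hlen : (σ.toList 0).length = (σ.cycleOf 0).support.card := length_toList σ 0
  constructor
  · rintro ⟨hc, rfl⟩
    apply List.ext_get
    · simp [hlen, hc]; omega
    · intro n hn1 hn2
      rcases n with _ | j
      · rw [List.get_eq_getElem, getElem_toList]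
        simp
      · rw [List.get_eq_getElem, getElem_toList]
        have hj : j < L - 1 := by simp [hc, hlen] at hn1; omega
        show _ = (List.ofFn _).get ⟨j, by simpa using hj⟩
        rw [List.get_ofFn]
        rfl
  · intro h
    have hc : (σ.cycleOf 0).support.card = L := by
      rw [← hlen, h]; simp; omega
    refine ⟨hc, funext fun i => ?_⟩
    have hi : i.val + 1 < (σ.toList 0).length := by
      rw [hlen, hc]; omega
    rw [← getElem_toList σ 0 (i.val+1) hi, ← List.get_eq_getElem (l := σ.toList 0) (i := ⟨i.val+1, hi⟩), List.get_of_eq h ⟨i.val+1, hi⟩]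
    show (List.ofFn g).get ⟨i.val, by simp⟩ = _
    rw [List.get_ofFn]
    congr 1


section Main

lemma card_compl {N : ℕ} (l : List (Fin N)) (hl : l.Nodup) :
    Fintype.card {x : Fin N // x ∉ l} = N - l.length := by
  rw [Fintype.card_subtype_compl, Fintype.card_fin]
  congr 1
  rw [Fintype.card_congr (Equiv.subtypeEquivRight
    (fun x => (List.mem_toFinset (a := x) (l := l)).symm)), Fintype.card_coe,
    List.toFinset_card_of_nodup hl]

lemma SL_card (N L : ℕ) [NeZero N] (hL2 : 2 ≤ L) (hLN : L ≤ N) :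
    (((univ : Finset (Perm (Fin N))).filter
        (fun σ => (∀ i, σ i ≠ i) ∧ 2 ∈ σ.cycleType)).filter
          (fun σ => (σ.cycleOf 0).support.card = L)).card
      = (N - 1).descFactorial (L - 1) *
          (if L = 2 then numDerangementsOf (N - 2) else numPairedDerangements (N - L)) := by
  set c := if L = 2 then numDerangementsOf (N - 2) else numPairedDerangements (N - L) with hc
  rw [Finset.card_eq_sum_card_fiberwise
    (f := fun σ : Perm (Fin N) => (fun i : Fin (L-1) => (σ ^ (i.val+1)) 0))
    (t := (univ : Finset (Fin (L-1) → Fin N)).filter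
        (fun g => Function.Injective g ∧ ∀ i, g i ≠ 0)) ?_]
  · rw [Finset.sum_congr rfl (g := fun _ => c) ?_]
    · rw [Finset.sum_const, card_G N (L-1), smul_eq_mul]
    · intro g hg
      simp only [Finset.mem_filter, Finset.mem_univ, true_and] at hg
      obtain ⟨hginj, hgne⟩ := hg
      set l : List (Fin N) := (0 : Fin N) :: List.ofFn g with hldef
      have hlnd : l.Nodup := by
        rw [hldef, List.nodup_cons]
        refine ⟨?_, List.nodup_ofFn.2 hginj⟩
        simp only [List.mem_ofFn]
        rintro ⟨i, hi⟩
        exact hgne i hi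
      have hllen : l.length = L := by
        rw [hldef]; simp; omega
      have hlL : 2 ≤ l.length := by omega
      have hx0 : l.get ⟨0, by omega⟩ = 0 := rfl
      have hfilter : (((univ : Finset (Perm (Fin N))).filter
            (fun σ => (∀ i, σ i ≠ i) ∧ 2 ∈ σ.cycleType)).filter
              (fun σ => (σ.cycleOf 0).support.card = L)).filter
                (fun σ => (fun i : Fin (L-1) => (σ ^ (i.val+1)) 0) = g)
          = (univ : Finset (Perm (Fin N))).filter
              (fun σ => ((∀ i, σ i ≠ i) ∧ 2 ∈ σ.cycleType) ∧ σ.toList 0 = l) := by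
        rw [Finset.filter_filter, Finset.filter_filter]
        apply Finset.filter_congr
        intro σ _
        constructor
        · rintro ⟨hP, hlen, hΦ⟩
          exact ⟨hP, (link hL2 g σ hP.1).1 ⟨hlen, hΦ⟩⟩
        · rintro ⟨hP, hlist⟩
          have := (link hL2 g σ hP.1).2 hlist
          exact ⟨hP, this.1, this.2⟩
      rw [hfilter, ← Fintype.card_subtype, ← Nat.card_eq_fintype_card,
        fiber_card hlnd hlL hx0]
      have hcard : Fintype.card {x : Fin N // x ∉ l} = N - L := by
        rw [card_compl l hlnd, hllen]
      by_cases h2 : L = 2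
      · have : ∀ τ : Perm {x : Fin N // x ∉ l},
            ((∀ i, τ i ≠ i) ∧ (l.length = 2 ∨ 2 ∈ τ.cycleType)) ↔ (∀ i, τ i ≠ i) := by
          intro τ
          rw [and_iff_left (Or.inl (by omega))]
        rw [Nat.card_congr (Equiv.subtypeEquivRight this), natCard_derange, hcard, hc,
          if_pos h2]
        exact congrArg _ (by omega)
      · have : ∀ τ : Perm {x : Fin N // x ∉ l},
            ((∀ i, τ i ≠ i) ∧ (l.length = 2 ∨ 2 ∈ τ.cycleType))
              ↔ ((∀ i, τ i ≠ i) ∧ 2 ∈ τ.cycleType) := by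
          intro τ
          rw [or_iff_right (by omega : ¬ l.length = 2)]
        rw [Nat.card_congr (Equiv.subtypeEquivRight this), natCard_paired, hcard, hc,
          if_neg h2]
  · intro σ hσ
    simp only [Finset.mem_coe, Finset.mem_filter, Finset.mem_univ, true_and] at hσ
    obtain ⟨⟨h1, h2⟩, hlen⟩ := hσ
    have hlist := (link hL2 (fun i : Fin (L-1) => (σ ^ (i.val+1)) 0) σ h1).1 ⟨hlen, rfl⟩
    have hnd : (σ.toList 0).Nodup := Equiv.Perm.nodup_toList σ 0
    rw [hlist, List.nodup_cons] at hnd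
    simp only [Finset.mem_coe, Finset.mem_filter, Finset.mem_univ, true_and]
    exact ⟨List.nodup_ofFn.1 hnd.2, fun i hi => hnd.1 (by
      simp only [List.mem_ofFn, Set.mem_range]
      exact ⟨i, hi⟩)⟩

end Main

lemma paired_small (N : ℕ) (h : N ≤ 1) : numPairedDerangements N = 0 := by
  rw [numPairedDerangements]
  haveI : IsEmpty {σ : Equiv.Perm (Fin N) // (∀ i, σ i ≠ i) ∧ 2 ∈ σ.cycleType} := by
    refine ⟨fun ⟨σ, h1, h2⟩ => ?_⟩
    have hsum := Equiv.Perm.sum_cycleType σ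
    have h2' : 2 ≤ σ.cycleType.sum :=
      Multiset.single_le_sum (fun x _ => Nat.zero_le x) 2 h2
    have hle : σ.support.card ≤ N := (Finset.card_le_univ _).trans_eq (Fintype.card_fin N)
    omega
  exact Nat.card_of_isEmpty

theorem pairedDerangements_recursion :
    numPairedDerangements 0 = 0 ∧ numPairedDerangements 1 = 0 ∧
    ∀ N, 2 ≤ N →
      numPairedDerangements N =
        (∑ k ∈ Finset.Icc 2 (N - 3),
            numPairedDerangements k * (Nat.factorial (N - 1) / Nat.factorial k)) +
          numDerangementsOf (N - 2) * (N - 1) := by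
  refine ⟨paired_small 0 (by norm_num), paired_small 1 (by norm_num), fun N hN => ?_⟩
  haveI : NeZero N := ⟨by omega⟩
  have hstart : numPairedDerangements N
      = ((univ : Finset (Perm (Fin N))).filter
          (fun σ => (∀ i, σ i ≠ i) ∧ 2 ∈ σ.cycleType)).card := by
    rw [numPairedDerangements, Nat.card_eq_fintype_card, Fintype.card_subtype]
  rw [hstart, Finset.card_eq_sum_card_fiberwise
    (f := fun σ : Perm (Fin N) => (σ.cycleOf 0).support.card) (t := Finset.Icc 2 N) ?_]
  · rw [Finset.sum_congr rfl (fun L hL => SL_card N L (Finset.mem_Icc.1 hL).1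
      (Finset.mem_Icc.1 hL).2)]
    have hsplit : Finset.Icc 2 N = insert 2 (Finset.Icc 3 N) := by
      ext x
      simp only [Finset.mem_Icc, Finset.mem_insert]
      omega
    rw [hsplit, Finset.sum_insert (by simp), if_pos rfl, Nat.descFactorial_one,
      Nat.mul_comm ((N:ℕ) - 1) (numDerangementsOf (N - 2)), Nat.add_comm]
    congr 1
    have hterm : ∀ L ∈ Finset.Icc 3 N,
        (N - 1).descFactorial (L - 1) *
            (if L = 2 then numDerangementsOf (N - 2) else numPairedDerangements (N - L))
          = numPairedDerangements (N - L) *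
              (Nat.factorial (N - 1) / Nat.factorial (N - L)) := by
      intro L hL
      rw [Finset.mem_Icc] at hL
      rw [if_neg (by omega), Nat.mul_comm]
      congr 1
      rw [Nat.descFactorial_eq_div (by omega : L - 1 ≤ N - 1)]
      congr 2
      omega
    rw [Finset.sum_congr rfl hterm]
    by_cases hN3 : 3 ≤ N
    · have h1 : ∑ L ∈ Finset.Icc 3 N,
          numPairedDerangements (N - L) * (Nat.factorial (N - 1) / Nat.factorial (N - L))
        = ∑ k ∈ Finset.Icc 0 (N - 3),
            numPairedDerangements k * (Nat.factorial (N - 1) / Nat.factorial k) := by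
        refine Finset.sum_nbij' (fun L => N - L) (fun k => N - k) ?_ ?_ ?_ ?_ ?_
        · intro a ha; simp only [Finset.mem_Icc] at ha ⊢; omega
        · intro a ha; simp only [Finset.mem_Icc] at ha ⊢; omega
        · intro a ha; simp only [Finset.mem_Icc] at ha ⊢; omega
        · intro a ha; simp only [Finset.mem_Icc] at ha ⊢; omega
        · intro a ha; rfl
      rw [h1]
      rw [← Finset.sum_subset (Finset.Icc_subset_Icc_left (by omega)) ?_]
      intro k hk hk2
      rw [Finset.mem_Icc] at hk hk2
      have : k ≤ 1 := by omega
      rw [paired_small k this, Nat.zero_mul]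
    · have hN2 : N = 2 := by omega
      subst hN2
      rw [show Finset.Icc 3 2 = ∅ from rfl, show (2:ℕ) - 3 = 0 from rfl,
        show Finset.Icc 2 0 = ∅ from rfl]
      simp
  · intro σ hσ
    rw [Finset.mem_coe, Finset.mem_filter] at hσ
    rw [Finset.mem_coe, Finset.mem_Icc]
    constructor
    · exact (Equiv.Perm.isCycle_cycleOf σ (hσ.2.1 0)).two_le_card_support
    · exact (Finset.card_le_univ _).trans_eq (Fintype.card_fin N)
end

section
/- For all N ≥ 4, P_N = (N-1) * ( P_{N-1} + P_{N-3} * (N-2) + (-1)^N ), where P_N is the number of derangements of N elements containing at least one 2-cycle. -/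
open Equiv Equiv.Perm

namespace PDaux

/-- derangement with no 2-cycle -/
def QP {β : Type*} (σ : Perm β) : Prop := ∀ i, σ i ≠ i ∧ σ (σ i) ≠ i

/-- derangement whose unique 2-cycle passes through `j` -/
def AP {α : Type*} (j : α) (τ : Perm α) : Prop :=
  (∀ a, τ a ≠ a) ∧ τ (τ j) = j ∧ ∀ a, a ≠ j → a ≠ τ j → τ (τ a) ≠ a

lemma QP_permCongr {β γ : Type*} (e : β ≃ γ) (σ : Perm β) :
    QP (e.permCongr σ) ↔ QP σ := by
  constructor
  · intro h b
    have := h (e b)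
    simp only [permCongr_apply, symm_apply_apply, ne_eq, EmbeddingLike.apply_eq_iff_eq] at this
    exact this
  · intro h i
    have := h (e.symm i)
    simp only [permCongr_apply, symm_apply_apply, ne_eq] at this ⊢
    constructor
    · intro hc; exact this.1 (by simpa using congrArg e.symm hc)
    · intro hc; exact this.2 (by simpa using congrArg e.symm hc)

lemma card_QP_congr {β γ : Type*} (e : β ≃ γ) :
    Nat.card {σ : Perm β // QP σ} = Nat.card {σ : Perm γ // QP σ} :=
  Nat.card_congr (Equiv.subtypeEquiv e.permCongr fun σ => (QP_permCongr e σ).symm)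

/-- The number of derangements of `Fin n` without 2-cycles. -/
noncomputable def Q (n : ℕ) : ℕ := Nat.card {σ : Perm (Fin n) // QP σ}

section keyiff

variable {α : Type*} [DecidableEq α]

lemma sigma_none (j : α) (τ : Perm α) :
    (Equiv.Perm.decomposeOption.symm (some j, τ)) none = some j := by
  simp [Equiv.Perm.decomposeOption_symm_apply]

lemma sigma_some (j : α) (τ : Perm α) (a : α) :
    (Equiv.Perm.decomposeOption.symm (some j, τ)) (some a)
      = if τ a = j then none else some (τ a) := by
  simp only [Equiv.Perm.decomposeOption_symm_apply, Perm.mul_apply, optionCongr_apply,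
    Option.map_some]
  rcases eq_or_ne (τ a) j with h | h
  · simp [h]
  · rw [if_neg h, swap_apply_of_ne_of_ne (by simp) (by simpa using h)]

lemma key_iff (j : α) (τ : Perm α) :
    QP (Equiv.Perm.decomposeOption.symm (some j, τ)) ↔ (AP j τ ∨ QP τ) := by
  set σ := Equiv.Perm.decomposeOption.symm (some j, τ) with hσ
  have hnone : σ none = some j := sigma_none j τ
  have hsome : ∀ a, σ (some a) = if τ a = j then none else some (τ a) := sigma_some j τ
  constructor
  · intro h
    have hj : τ j ≠ j := by
      intro hc
      have := (h none).2
      rw [hnone, hsome j, if_pos hc] at this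
      exact this rfl
    have hder : ∀ a, τ a ≠ a := by
      intro a hc
      rcases eq_or_ne (τ a) j with h2 | h2
      · have haj : a = j := by rw [← hc, h2]
        subst haj; exact hj hc
      · have := (h (some a)).1
        rw [hsome a, if_neg h2] at this
        exact this (by rw [hc])
    by_cases hA : τ (τ j) = j
    · left
      refine ⟨hder, hA, ?_⟩
      intro a haj hatj hc
      -- τ (τ a) = a; derive contradiction
      have h1 : τ a ≠ j := by
        intro h2
        -- τ a = j = τ (τ j)  ⇒  a = τ j
        exact hatj (τ.injective (h2.trans hA.symm))
      have h2 : τ (τ a) ≠ j := by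
        intro h2
        exact haj (by rw [← hc, h2])
      have := (h (some a)).2
      rw [hsome a, if_neg h1, hsome (τ a), if_neg h2] at this
      exact this (by rw [hc])
    · right
      intro a
      refine ⟨hder a, ?_⟩
      intro hc
      rcases eq_or_ne a j with rfl | haj
      · exact hA hc
      rcases eq_or_ne (τ a) j with h1 | h1
      · have h3 : τ j = a := by rw [← h1, hc]
        exact hA (by rw [h3, h1])
      · have h2 : τ (τ a) ≠ j := by rw [hc]; exact haj
        have := (h (some a)).2
        rw [hsome a, if_neg h1, hsome (τ a), if_neg h2] at this
        exact this (by rw [hc])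
  · intro h x
    have hj : τ j ≠ j := by
      rcases h with h | h
      · exact h.1 j
      · exact (h j).1
    have hder : ∀ a, τ a ≠ a := by
      rcases h with h | h
      · exact h.1
      · exact fun a => (h a).1
    rcases x with _ | a
    · refine ⟨by rw [hnone]; simp, ?_⟩
      rw [hnone, hsome j, if_neg hj]
      simp
    · constructor
      · rw [hsome a]
        rcases eq_or_ne (τ a) j with h1 | h1
        · rw [if_pos h1]; simp
        · rw [if_neg h1]; simpa using hder a
      · rw [hsome a]
        rcases eq_or_ne (τ a) j with h1 | h1
        · rw [if_pos h1, hnone]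
          intro hc
          have : j = a := by simpa using hc
          rw [← this] at h1; exact hj h1
        · rw [if_neg h1, hsome (τ a)]
          rcases eq_or_ne (τ (τ a)) j with h2 | h2
          · rw [if_pos h2]; simp
          · rw [if_neg h2]
            intro hc
            have hc : τ (τ a) = a := by simpa using hc
            rcases h with h | h
            · rcases eq_or_ne a j with rfl | haj
              · exact h2 hc
              · have hatj : a ≠ τ j := by
                  intro h3
                  exact h1 (by rw [h3, h.2.1])
                exact h.2.2 a haj hatj hc
            · exact (h a).2 hc
  
end keyiff

/-- split a subtype over `Option β × γ` when the `none` part is empty -/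
def optSplit {β γ : Type*} (C : Option β × γ → Prop) (hnone : ∀ t : γ, ¬ C (none, t)) :
    {x : Option β × γ // C x} ≃ {y : β × γ // C (some y.1, y.2)} where
  toFun x := ⟨((x.1.1).get (by
      rcases x with ⟨⟨o, t⟩, h⟩
      cases o with
      | none => exact absurd h (hnone t)
      | some b => simp), x.1.2), by
      rcases x with ⟨⟨o, t⟩, h⟩
      cases o with
      | none => exact absurd h (hnone t)
      | some b => simpa using h⟩
  invFun y := ⟨(some y.1.1, y.1.2), y.2⟩
  left_inv := by
    rintro ⟨⟨o, t⟩, h⟩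
    cases o with
    | none => exact absurd h (hnone t)
    | some b => rfl
  right_inv := by rintro ⟨⟨b, t⟩, h⟩; rfl

section step1

variable {α : Type*} [DecidableEq α] [Fintype α]

lemma disjAPQP (j : α) (τ : Perm α) : ¬ (AP j τ ∧ QP τ) := by
  rintro ⟨hA, hQ⟩
  exact (hQ (τ j)).2 (by simpa using hA.2.1)

lemma step1 : Nat.card {σ : Perm (Option α) // QP σ}
    = Nat.card {x : α × Perm α // AP x.1 x.2}
      + Fintype.card α * Nat.card {τ : Perm α // QP τ} := by
  classical
  have e1 : {σ : Perm (Option α) // QP σ}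
      ≃ {x : Option α × Perm α // QP (Equiv.Perm.decomposeOption.symm x)} :=
    Equiv.subtypeEquiv Equiv.Perm.decomposeOption (fun σ => by rw [Equiv.symm_apply_apply])
  have hnone : ∀ τ : Perm α, ¬ QP (Equiv.Perm.decomposeOption.symm ((none : Option α), τ)) := by
    intro τ h
    have := (h none).1
    exact this (by simp [Equiv.Perm.decomposeOption_symm_apply])
  have e2 := optSplit (fun x : Option α × Perm α => QP (Equiv.Perm.decomposeOption.symm x)) hnone
  have e3 : {y : α × Perm α // QP (Equiv.Perm.decomposeOption.symm (some y.1, y.2))}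
      ≃ {y : α × Perm α // AP y.1 y.2 ∨ QP y.2} :=
    Equiv.subtypeEquivRight (fun y => key_iff y.1 y.2)
  have e4 : {y : α × Perm α // AP y.1 y.2 ∨ QP y.2}
      ≃ {y : α × Perm α // AP y.1 y.2} ⊕ {y : α × Perm α // QP y.2} :=
    subtypeOrEquiv _ _ (by
      rw [disjoint_iff_inf_le]
      rintro x ⟨h1, h2⟩
      exact disjAPQP x.1 x.2 ⟨h1, h2⟩)
  have e5 : {y : α × Perm α // QP y.2} ≃ α × {τ : Perm α // QP τ} :=
    (Equiv.subtypeProdEquivSigmaSubtype (fun _ τ => QP τ)).trans (Equiv.sigmaEquivProd _ _)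
  rw [Nat.card_congr (((e1.trans e2).trans e3).trans e4), Nat.card_sum,
    Nat.card_congr e5, Nat.card_prod, Nat.card_eq_fintype_card, Nat.card_eq_fintype_card]

end step1

section stepA

variable {α : Type*} [DecidableEq α] [Fintype α]

/-- decomposition of the case-A set along `(j, τ j)` -/
def sigmaAP : {x : α × Perm α // AP x.1 x.2}
    ≃ Σ p : α × α, {τ : Perm α // AP p.1 τ ∧ τ p.1 = p.2} where
  toFun x := ⟨(x.1.1, x.1.2 x.1.1), x.1.2, x.2, rfl⟩
  invFun y := ⟨(y.1.1, y.2.1), y.2.2.1⟩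
  left_inv x := rfl
  right_inv := by
    rintro ⟨⟨j, k⟩, τ, h1, h2⟩
    dsimp only at h2
    subst h2
    rfl

lemma memiff (j k : α) (τ : Perm α) (h1 : AP j τ) (h2 : τ j = k) :
    ∀ a, (a ≠ j ∧ a ≠ k) ↔ (τ a ≠ j ∧ τ a ≠ k) := by
  have hkj : τ k = j := by rw [← h2]; exact h1.2.1
  intro a
  constructor
  · rintro ⟨haj, hak⟩
    constructor
    · intro hc; exact hak (τ.injective (hc.trans hkj.symm))
    · intro hc; exact haj (τ.injective (hc.trans h2.symm))
  · rintro ⟨h3, h4⟩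
    constructor
    · intro hc; subst hc; exact h4 h2
    · intro hc; subst hc; exact h3 hkj

/-- case A for a fixed pair `(j, k)` is the no-2-cycle derangement set of the complement -/
def caseAEquiv (j k : α) (hjk : j ≠ k) :
    {τ : Perm α // AP j τ ∧ τ j = k} ≃ {ρ : Perm {a : α // a ≠ j ∧ a ≠ k} // QP ρ} where
  toFun x := ⟨x.1.subtypePerm (fun a => (memiff j k x.1 x.2.1 x.2.2 a).symm), by
    obtain ⟨τ, h1, h2⟩ := x
    intro a
    constructor
    · intro hc
      exact h1.1 a.1 (congrArg Subtype.val hc)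
    · intro hc
      exact h1.2.2 a.1 a.2.1 (by rw [h2]; exact a.2.2) (congrArg Subtype.val hc)⟩
  invFun y := ⟨swap j k * Equiv.Perm.ofSubtype y.1, by
    obtain ⟨ρ, hρ⟩ := y
    have happ : ∀ a (ha : a ≠ j ∧ a ≠ k),
        (swap j k * Equiv.Perm.ofSubtype ρ) a = (ρ ⟨a, ha⟩ : α) := by
      intro a ha
      rw [Perm.mul_apply, Equiv.Perm.ofSubtype_apply_of_mem ρ ha,
        swap_apply_of_ne_of_ne (ρ ⟨a, ha⟩).2.1 (ρ ⟨a, ha⟩).2.2]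
    have hj : (swap j k * Equiv.Perm.ofSubtype ρ) j = k := by
      rw [Perm.mul_apply, Equiv.Perm.ofSubtype_apply_of_not_mem ρ (by simp), swap_apply_left]
    have hk : (swap j k * Equiv.Perm.ofSubtype ρ) k = j := by
      rw [Perm.mul_apply, Equiv.Perm.ofSubtype_apply_of_not_mem ρ (by simp [Ne.symm hjk]),
        swap_apply_right]
    refine ⟨⟨?_, ?_, ?_⟩, hj⟩
    · intro a
      rcases eq_or_ne a j with rfl | haj
      · rw [hj]; exact Ne.symm hjk
      rcases eq_or_ne a k with rfl | hak
      · rw [hk]; exact hjk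
      · rw [happ a ⟨haj, hak⟩]
        intro hc
        exact (hρ ⟨a, haj, hak⟩).1 (Subtype.ext hc)
    · rw [hj, hk]
    · intro a haj hak
      rw [hj] at hak
      rw [happ a ⟨haj, hak⟩, happ _ (ρ ⟨a, haj, hak⟩).2]
      intro hc
      exact (hρ ⟨a, haj, hak⟩).2 (Subtype.ext hc)⟩
  left_inv := by
    rintro ⟨τ, h1, h2⟩
    have hkj : τ k = j := by rw [← h2]; exact h1.2.1
    apply Subtype.ext
    apply Equiv.ext
    intro a
    rcases eq_or_ne a j with rfl | haj
    · rw [Perm.mul_apply, Equiv.Perm.ofSubtype_apply_of_not_mem _ (by simp), swap_apply_left, h2]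
    rcases eq_or_ne a k with rfl | hak
    · rw [Perm.mul_apply, Equiv.Perm.ofSubtype_apply_of_not_mem _ (by simp [Ne.symm hjk]),
        swap_apply_right, hkj]
    · rw [Perm.mul_apply, Equiv.Perm.ofSubtype_apply_of_mem _ ⟨haj, hak⟩]
      have := (memiff j k τ h1 h2 a).1 ⟨haj, hak⟩
      exact swap_apply_of_ne_of_ne this.1 this.2
  right_inv := by
    rintro ⟨ρ, hρ⟩
    apply Subtype.ext
    apply Equiv.ext
    rintro ⟨a, ha⟩
    apply Subtype.ext
    simp only [Perm.subtypePerm_apply]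
    rw [Perm.mul_apply, Equiv.Perm.ofSubtype_apply_of_mem ρ ha,
      swap_apply_of_ne_of_ne (ρ ⟨a, ha⟩).2.1 (ρ ⟨a, ha⟩).2.2]

lemma card_compl_pair (j k : α) (hjk : j ≠ k) :
    Fintype.card {a : α // a ≠ j ∧ a ≠ k} = Fintype.card α - 2 := by
  classical
  have e : {a : α // a ≠ j ∧ a ≠ k} ≃ {a : α // ¬ (a = j ∨ a = k)} :=
    Equiv.subtypeEquivRight (fun a => by tauto)
  rw [Fintype.card_congr e, Fintype.card_subtype_compl]
  congr 1
  rw [Fintype.card_subtype_or_disjoint _ _ (by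
    rw [disjoint_iff_inf_le]; rintro x ⟨rfl, h2⟩; exact hjk h2)]
  simp [Fintype.card_subtype_eq]

lemma nat_card_sigma {ι : Type*} [Fintype ι] (f : ι → Type*) [∀ i, Finite (f i)] :
    Nat.card (Σ i, f i) = ∑ i, Nat.card (f i) := by
  classical
  letI : ∀ i, Fintype (f i) := fun i => Fintype.ofFinite _
  simp [Nat.card_eq_fintype_card, Fintype.card_sigma]

lemma stepA : Nat.card {x : α × Perm α // AP x.1 x.2}
    = (Fintype.card α * Fintype.card α - Fintype.card α) * Q (Fintype.card α - 2) := by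
  classical
  rw [Nat.card_congr sigmaAP, nat_card_sigma]
  have hterm : ∀ p : α × α,
      Nat.card {τ : Perm α // AP p.1 τ ∧ τ p.1 = p.2}
        = if p.1 = p.2 then 0 else Q (Fintype.card α - 2) := by
    rintro ⟨j, k⟩
    rcases eq_or_ne j k with rfl | hjk
    · rw [if_pos rfl, Nat.card_eq_zero]
      left
      constructor
      rintro ⟨τ, h1, h2⟩
      exact h1.1 j h2
    · rw [if_neg hjk, Nat.card_congr (caseAEquiv j k hjk), Q]
      exact card_QP_congr (Fintype.equivFinOfCardEq (card_compl_pair j k hjk))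
  rw [Finset.sum_congr rfl (fun p _ => hterm p), Finset.sum_ite, Finset.sum_const_zero,
    zero_add, Finset.sum_const, smul_eq_mul]
  congr 1
  have : (Finset.univ.filter fun p : α × α => ¬ p.1 = p.2) = Finset.univ.offDiag := by
    ext p; simp
  rw [this, Finset.offDiag_card, Finset.card_univ]

end stepA

lemma Q_rec (n : ℕ) : Q (n + 4) = (n + 3) * Q (n + 3) + ((n + 3) * (n + 2)) * Q (n + 1) := by
  classical
  have h1 : Q (n + 4) = Nat.card {σ : Perm (Option (Fin (n + 3))) // QP σ} :=
    (card_QP_congr (finSuccEquiv (n + 3)).symm).symm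
  rw [h1, step1, stepA]
  simp only [Fintype.card_fin]
  have e2 : (n + 3) * (n + 3) - (n + 3) = (n + 3) * (n + 2) := by
    have hh : (n + 3) * (n + 3) = (n + 3) * (n + 2) + (n + 3) := by ring
    omega
  have e3 : n + 3 - 2 = n + 1 := by omega
  have hq3 : Nat.card {τ : Perm (Fin (n + 3)) // QP τ} = Q (n + 3) := rfl
  have hq1 : Nat.card {σ : Perm (Fin (n + 1)) // QP σ} = Q (n + 1) := rfl
  rw [e2, e3, Q, Q, hq3]
  exact Nat.add_comm _ _

/-- a permutation has a 2-cycle iff some non-fixed point returns in two steps -/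
lemma two_mem_cycleType_iff {β : Type*} [Fintype β] [DecidableEq β] (σ : Perm β) :
    2 ∈ σ.cycleType ↔ ∃ i, σ i ≠ i ∧ σ (σ i) = i := by
  rw [Equiv.Perm.cycleType_def, Multiset.mem_map]
  constructor
  · rintro ⟨c, hc, hcard⟩
    rw [Finset.mem_val] at hc
    obtain ⟨hcyc, hagree⟩ := Equiv.Perm.mem_cycleFactorsFinset_iff.1 hc
    have hcard' : c.support.card = 2 := hcard
    have hne : c.support.Nonempty := Finset.card_pos.1 (by omega)
    obtain ⟨i, hi⟩ := hne
    have hord : orderOf c = 2 := by rw [hcyc.orderOf, hcard']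
    have hc2 : c * c = 1 := by
      have := pow_orderOf_eq_one c
      rwa [hord, sq] at this
    refine ⟨i, ?_, ?_⟩
    · rw [← hagree i hi]
      exact Equiv.Perm.mem_support.1 hi
    · rw [← hagree i hi, ← hagree (c i) (Equiv.Perm.apply_mem_support.2 hi)]
      have := congrFun (congrArg (fun p : Perm β => (p : β → β)) hc2) i
      simpa using this
  · rintro ⟨i, h1, h2⟩
    refine ⟨swap i (σ i), ?_, ?_⟩
    · rw [Finset.mem_val]
      rw [Equiv.Perm.mem_cycleFactorsFinset_iff]
      refine ⟨Equiv.Perm.isCycle_swap (Ne.symm h1), ?_⟩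
      intro a ha
      rw [Equiv.Perm.support_swap (Ne.symm h1)] at ha
      simp only [Finset.mem_insert, Finset.mem_singleton] at ha
      rcases ha with rfl | rfl
      · rw [swap_apply_left]
      · rw [swap_apply_right, h2]
    · simpa using Equiv.Perm.card_support_swap (Ne.symm h1)

lemma split_count (N : ℕ) :
    numPairedDerangements N + Q N = numDerangements N := by
  classical
  have e : {σ : Perm (Fin N) // (∀ i, σ i ≠ i) ∧ 2 ∈ σ.cycleType} ⊕ {σ : Perm (Fin N) // QP σ}
      ≃ {σ : Perm (Fin N) // ∀ i, σ i ≠ i} := by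
    refine (subtypeOrEquiv _ _ ?_).symm.trans (Equiv.subtypeEquivRight ?_)
    · rw [disjoint_iff_inf_le]
      rintro σ ⟨⟨hd, h2⟩, hQ⟩
      obtain ⟨i, hi1, hi2⟩ := (two_mem_cycleType_iff σ).1 h2
      exact (hQ i).2 hi2
    · intro σ
      constructor
      · rintro (⟨hd, _⟩ | hQ)
        · exact hd
        · exact fun i => (hQ i).1
      · intro hd
        by_cases h2 : 2 ∈ σ.cycleType
        · exact Or.inl ⟨hd, h2⟩
        · refine Or.inr (fun i => ⟨hd i, fun hc => h2 ?_⟩)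
          exact (two_mem_cycleType_iff σ).2 ⟨i, hd i, hc⟩
  have hcard := Nat.card_congr e
  rw [Nat.card_sum] at hcard
  rw [numPairedDerangements, Q, hcard, ← card_derangements_fin_eq_numDerangements,
    Nat.card_eq_fintype_card]
  exact Fintype.card_congr (Equiv.subtypeEquivRight (fun σ => Iff.rfl))

end PDaux

theorem pairedDerangements_recursion' (N : ℕ) (hN : 4 ≤ N) :
    (numPairedDerangements N : ℤ) =
      (N - 1) * ((numPairedDerangements (N - 1) : ℤ) +
        (numPairedDerangements (N - 3) : ℤ) * (N - 2) + (-1) ^ N) := by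
  obtain ⟨m, rfl⟩ : ∃ m, N = m + 4 := ⟨N - 4, by omega⟩
  have e1 : m + 4 - 1 = m + 3 := by omega
  have e3 : m + 4 - 3 = m + 1 := by omega
  rw [e1, e3]
  have hs : ∀ n, (numPairedDerangements n : ℤ) = (numDerangements n : ℤ) - (PDaux.Q n : ℤ) := by
    intro n
    have := PDaux.split_count n
    have := congrArg (Nat.cast : ℕ → ℤ) this
    push_cast at this
    linarith
  have hQ : ((PDaux.Q (m + 4) : ℤ)) = (m + 3) * (PDaux.Q (m + 3) : ℤ)
      + ((m + 3) * (m + 2)) * (PDaux.Q (m + 1) : ℤ) := by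
    have := congrArg (Nat.cast : ℕ → ℤ) (PDaux.Q_rec m)
    push_cast at this
    linarith
  have hD4 : ((numDerangements (m + 4) : ℤ)) = (m + 3) *
      ((numDerangements (m + 2) : ℤ) + (numDerangements (m + 3) : ℤ)) := by
    have := congrArg (Nat.cast : ℕ → ℤ) (numDerangements_add_two (m + 2))
    push_cast at this
    linarith
  have hD2 : ((numDerangements (m + 2) : ℤ)) = (m + 2) * (numDerangements (m + 1) : ℤ)
      + (-1) ^ m := by
    have := numDerangements_succ (m + 1)
    push_cast at this
    have hp : ((-1 : ℤ)) ^ (m + 1) = -(-1 : ℤ) ^ m := by rw [pow_succ]; ring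
    rw [hp] at this
    linarith
  have hp4 : ((-1 : ℤ)) ^ (m + 4) = (-1 : ℤ) ^ m := by rw [pow_add]; norm_num
  rw [hs, hs, hs, hQ, hD4, hD2]
  push_cast
  rw [hp4]
  ring
end

section
/- The number of permutations of {1,...,N} with all cycle lengths at least 3 equals N! * Σ_{k=0}^N (-1)^k * Σ_{j=0}^{⌊k/2⌋} (-1)^j / ((k-2j)! * j! * 2^j). -/
open Finset Equiv Equiv.Perm

namespace LCP

attribute [local instance 10] Classical.propDecidable

variable {n : ℕ}

def flip (i j : ℕ) : Equiv.Perm (Fin i ⊕ Fin j × Bool) :=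
  Equiv.sumCongr (Equiv.refl _) ((Equiv.refl (Fin j)).prodCongr (Function.Involutive.toPerm not Bool.not_not))

@[simp] lemma flip_inl (i j : ℕ) (x : Fin i) : flip i j (Sum.inl x) = Sum.inl x := rfl

@[simp] lemma flip_inr (i j : ℕ) (t : Fin j) (b : Bool) :
    flip i j (Sum.inr (t, b)) = Sum.inr (t, !b) := rfl

@[simp] lemma flip_flip (i j : ℕ) (a : Fin i ⊕ Fin j × Bool) :
    flip i j (flip i j a) = a := by
  rcases a with x | ⟨t, b⟩ <;> simp

def Compat (σ : Perm (Fin n)) {i j : ℕ} (f : (Fin i ⊕ Fin j × Bool) ↪ Fin n) : Prop :=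
  ∀ a, σ (f a) = f (flip i j a)

/-- fixed points as a subtype -/
abbrev FixT (σ : Perm (Fin n)) := {x : Fin n // σ x = x}

/-- (sorted) 2-cycles as a subtype -/
abbrev CycT (σ : Perm (Fin n)) := {q : Fin n × Fin n // q.1 < q.2 ∧ σ q.1 = q.2 ∧ σ q.2 = q.1}

lemma cyc_eq_core {σ : Perm (Fin n)} {q1 q2 r1 r2 x : Fin n}
    (hqlt : q1 < q2) (hq1 : σ q1 = q2) (hq2 : σ q2 = q1)
    (hrlt : r1 < r2) (hr1 : σ r1 = r2) (hr2 : σ r2 = r1)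
    (hq : x = q1 ∨ x = q2) (hr : x = r1 ∨ x = r2) : q1 = r1 ∧ q2 = r2 := by
  rcases hq with rfl | rfl <;> rcases hr with rfl | rfl
  · exact ⟨rfl, by rw [← hq1, ← hr1]⟩
  · exfalso; rw [hr2] at hq1; subst hq1; exact absurd hrlt (lt_asymm hqlt)
  · exfalso; rw [hr1] at hq2; subst hq2; exact absurd hrlt (lt_asymm hqlt)
  · exact ⟨by rw [← hq2, ← hr2], rfl⟩

lemma cyc_eq_of_shared {σ : Perm (Fin n)} (q r : CycT σ) (x : Fin n)
    (hq : x = q.1.1 ∨ x = q.1.2) (hr : x = r.1.1 ∨ x = r.1.2) : q = r := by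
  have := cyc_eq_core q.2.1 q.2.2.1 q.2.2.2 r.2.1 r.2.2.1 r.2.2.2 hq hr
  apply Subtype.ext
  exact Prod.ext this.1 this.2

lemma cyc_fst_not_fix {σ : Perm (Fin n)} (q : CycT σ) : σ q.1.1 ≠ q.1.1 := by
  rw [q.2.2.1]; exact (ne_of_lt q.2.1).symm

lemma cyc_snd_not_fix {σ : Perm (Fin n)} (q : CycT σ) : σ q.1.2 ≠ q.1.2 := by
  rw [q.2.2.2]; exact (ne_of_lt q.2.1)

/-- The structure equivalence for a fixed permutation. -/
noncomputable def structEquiv (σ : Perm (Fin n)) (i j : ℕ) :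
    {f : (Fin i ⊕ Fin j × Bool) ↪ Fin n // Compat σ f} ≃
      ((Fin i ↪ FixT σ) × (Fin j ↪ CycT σ) × (Fin j → Bool)) where
  toFun := fun ⟨f, hf⟩ =>
    ( ⟨fun x => ⟨f (Sum.inl x), by simpa using hf (Sum.inl x)⟩,
        fun x y h => by
          apply Sum.inl.inj; exact f.injective (congrArg Subtype.val h)⟩,
      ⟨fun t =>
        if h : (f (Sum.inr (t, true)) : Fin n) < f (Sum.inr (t, false)) then
          ⟨(f (Sum.inr (t, true)), f (Sum.inr (t, false))),
            h, by simpa using hf (Sum.inr (t, true)), by simpa using hf (Sum.inr (t, false))⟩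
        else
          ⟨(f (Sum.inr (t, false)), f (Sum.inr (t, true))),
            lt_of_le_of_ne (not_lt.mp h)
              (fun he => (by simpa [he] using f.injective he : False)),
            by simpa using hf (Sum.inr (t, false)), by simpa using hf (Sum.inr (t, true))⟩,
        by
          intro t t' h
          have hx : (f (Sum.inr (t, false)) : Fin n) = f (Sum.inr (t', false)) ∨
              (f (Sum.inr (t, false)) : Fin n) = f (Sum.inr (t', true)) := by
            by_cases h1 : (f (Sum.inr (t, true)) : Fin n) < f (Sum.inr (t, false)) <;>
            by_cases h2 : (f (Sum.inr (t', true)) : Fin n) < f (Sum.inr (t', false)) <;>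
            simp only [h1, h2, dif_pos, dif_neg, not_false_iff] at h <;>
            · have := congrArg Subtype.val h
              simp only [Prod.mk.injEq] at this
              tauto
          rcases hx with hx | hx
          · have := f.injective hx; simpa using this
          · have := f.injective hx; simp at this⟩,
      fun t => decide ((f (Sum.inr (t, true)) : Fin n) < f (Sum.inr (t, false))) )
  invFun := fun ⟨g₁, g₂, c⟩ =>
    ⟨⟨fun a => Sum.rec (fun x => (g₁ x : Fin n))
        (fun p => if p.2 = c p.1 then (g₂ p.1).1.1 else (g₂ p.1).1.2) a, by
      intro a a' h
      rcases a with x | ⟨t, b⟩ <;> rcases a' with x' | ⟨t', b'⟩ <;> simp only [] at h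
      · exact congrArg Sum.inl (g₁.injective (Subtype.ext h))
      · exfalso
        have hfix : σ (g₁ x : Fin n) = (g₁ x : Fin n) := (g₁ x).2
        rw [h] at hfix
        split at hfix
        · exact cyc_fst_not_fix (g₂ t') hfix
        · exact cyc_snd_not_fix (g₂ t') hfix
      · exfalso
        have hfix : σ (g₁ x' : Fin n) = (g₁ x' : Fin n) := (g₁ x').2
        rw [← h] at hfix
        split at hfix
        · exact cyc_fst_not_fix (g₂ t) hfix
        · exact cyc_snd_not_fix (g₂ t) hfix
      · have ht : t = t' := by
          apply g₂.injective
          apply cyc_eq_of_shared (g₂ t) (g₂ t')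
            (x := if b = c t then (g₂ t).1.1 else (g₂ t).1.2)
          · split <;> simp
          · rw [h]; split <;> simp
        subst ht
        congr 1
        by_cases hb : b = c t <;> by_cases hb' : b' = c t
        · rw [hb, hb']
        · exfalso; rw [if_pos hb, if_neg hb'] at h
          exact (ne_of_lt (g₂ t).2.1) h
        · exfalso; rw [if_neg hb, if_pos hb'] at h
          exact (ne_of_lt (g₂ t).2.1) h.symm
        · revert hb hb'; cases b <;> cases b' <;> cases c t <;> simp
      ⟩, by
      intro a
      rcases a with x | ⟨t, b⟩
      · exact (g₁ x).2
      · simp only [flip_inr, Function.Embedding.coeFn_mk]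
        show σ (if b = c t then (g₂ t).1.1 else (g₂ t).1.2) = (if (!b) = c t then (g₂ t).1.1 else (g₂ t).1.2)
        by_cases hb : b = c t
        · rw [if_pos hb, if_neg (by cases b <;> cases hc : c t <;> simp_all)]
          exact (g₂ t).2.2.1
        · rw [if_neg hb, if_pos (by cases b <;> cases hc : c t <;> simp_all)]
          exact (g₂ t).2.2.2⟩
  left_inv := by
    rintro ⟨f, hf⟩
    apply Subtype.ext
    apply Function.Embedding.ext
    intro a
    rcases a with x | ⟨t, b⟩
    · rfl
    · dsimp only [DFunLike.coe]
      by_cases h : (f (Sum.inr (t, true)) : Fin n) < f (Sum.inr (t, false)) <;>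
        cases b <;> simp [h]
  right_inv := by
    rintro ⟨g₁, g₂, c⟩
    refine Prod.ext ?_ (Prod.ext ?_ ?_)
    · apply Function.Embedding.ext; intro x; apply Subtype.ext; rfl
    · apply Function.Embedding.ext; intro t; apply Subtype.ext
      dsimp only [DFunLike.coe]
      by_cases hc : c t = true
      · simp [hc, (g₂ t).2.1]
      · replace hc : c t = false := by revert hc; cases c t <;> simp
        simp [hc, lt_asymm (g₂ t).2.1]
    · funext t
      dsimp only [DFunLike.coe]
      by_cases hc : c t = true
      · simp [hc, (g₂ t).2.1]
      · replace hc : c t = false := by revert hc; cases c t <;> simp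
        simp [hc, lt_asymm (g₂ t).2.1]

/-- number of compatible embeddings -/
noncomputable def Nc (σ : Perm (Fin n)) (i j : ℕ) : ℕ :=
  Fintype.card {f : (Fin i ⊕ Fin j × Bool) ↪ Fin n // Compat σ f}

lemma Nc_eq (σ : Perm (Fin n)) (i j : ℕ) :
    Nc σ i j = (Fintype.card (FixT σ)).descFactorial i *
      ((Fintype.card (CycT σ)).descFactorial j * 2 ^ j) := by
  rw [Nc, Fintype.card_congr (structEquiv σ i j)]
  rw [Fintype.card_prod, Fintype.card_prod]
  rw [Fintype.card_embedding_eq, Fintype.card_embedding_eq]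
  simp [Fintype.card_fun]

lemma fixT_card_le (σ : Perm (Fin n)) : Fintype.card (FixT σ) ≤ n := by
  simpa using Fintype.card_subtype_le (α := Fin n) _

lemma cycT_card_le (σ : Perm (Fin n)) : Fintype.card (CycT σ) ≤ n := by
  have : Function.Injective (fun q : CycT σ => q.1.1) := by
    intro q r h
    exact cyc_eq_of_shared q r q.1.1 (Or.inl rfl) (Or.inl h)
  simpa using Fintype.card_le_of_injective _ this

lemma two_mem_cycleType_iff (σ : Perm (Fin n)) :
    2 ∈ σ.cycleType ↔ Nonempty (CycT σ) := by
  constructor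
  · intro h
    obtain ⟨c, τ, rfl, hd, hc, hcard⟩ := Equiv.Perm.mem_cycleType_iff.mp h
    obtain ⟨a, b, hab, rfl⟩ := Equiv.Perm.card_support_eq_two.mp hcard
    have hτa : τ a = a := by
      rcases (Equiv.Perm.disjoint_iff_eq_or_eq.mp hd) a with h' | h'
      · exact absurd h' (by simp only [Equiv.swap_apply_left]; exact fun he => hab he.symm)
      · exact h'
    have hτb : τ b = b := by
      rcases (Equiv.Perm.disjoint_iff_eq_or_eq.mp hd) b with h' | h'
      · exact absurd h' (by simp only [Equiv.swap_apply_right]; exact hab)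
      · exact h'
    have hσa : (Equiv.swap a b * τ) a = b := by
      simp [Equiv.Perm.mul_apply, hτa, Equiv.swap_apply_left]
    have hσb : (Equiv.swap a b * τ) b = a := by
      simp [Equiv.Perm.mul_apply, hτb, Equiv.swap_apply_right]
    rcases lt_or_gt_of_ne hab with hlt | hlt
    · exact ⟨⟨(a, b), hlt, hσa, hσb⟩⟩
    · exact ⟨⟨(b, a), hlt, hσb, hσa⟩⟩
  · rintro ⟨⟨⟨a, b⟩, hlt, h1, h2⟩⟩
    have hab : a ≠ b := ne_of_lt hlt
    have hmem : Equiv.swap a b ∈ σ.cycleFactorsFinset := by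
      rw [Equiv.Perm.mem_cycleFactorsFinset_iff]
      refine ⟨Equiv.Perm.isCycle_swap hab, ?_⟩
      intro x hx
      rw [Equiv.Perm.support_swap hab] at hx
      simp only [Finset.mem_insert, Finset.mem_singleton] at hx
      rcases hx with rfl | rfl
      · rw [Equiv.swap_apply_left, h1]
      · rw [Equiv.swap_apply_right, h2]
    rw [Equiv.Perm.cycleType_def]
    rw [Multiset.mem_map]
    exact ⟨Equiv.swap a b, by rwa [Finset.mem_val], by
      simp [Equiv.Perm.card_support_swap hab]⟩

lemma alt_sum_choose {F m : ℕ} (h : F ≤ m) :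
    ∑ i ∈ range (m + 1), ((-1 : ℚ) ^ i * F.choose i) = if F = 0 then 1 else 0 := by
  have h1 : ∑ i ∈ range (F + 1), ((-1 : ℚ) ^ i * F.choose i) = if F = 0 then 1 else 0 := by
    have := Int.alternating_sum_range_choose (n := F)
    have := congrArg (fun z : ℤ => (z : ℚ)) this
    push_cast at this
    rw [this]
  rw [← h1]
  refine (Finset.sum_subset ?_ ?_).symm
  · exact Finset.range_subset_range.mpr (by omega)
  · intro x _ hx
    rw [Finset.mem_range, not_lt] at hx
    rw [Nat.choose_eq_zero_of_lt (by omega), Nat.cast_zero, mul_zero]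

lemma claimA (σ : Perm (Fin n)) :
    ∑ i ∈ range (n + 1), ∑ j ∈ range (n + 1),
      ((-1 : ℚ) ^ (i + j) / (i.factorial * j.factorial * 2 ^ j)) * (Nc σ i j : ℚ) =
      if (∀ x, σ x ≠ x) ∧ 2 ∉ σ.cycleType then 1 else 0 := by
  set F := Fintype.card (FixT σ) with hF
  set T := Fintype.card (CycT σ) with hT
  have key : ∀ i j : ℕ,
      ((-1 : ℚ) ^ (i + j) / (i.factorial * j.factorial * 2 ^ j)) * (Nc σ i j : ℚ) =
      ((-1 : ℚ) ^ i * F.choose i) * ((-1 : ℚ) ^ j * T.choose j) := by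
    intro i j
    rw [Nc_eq, ← hF, ← hT]
    rw [Nat.descFactorial_eq_factorial_mul_choose, Nat.descFactorial_eq_factorial_mul_choose]
    have hi : (i.factorial : ℚ) ≠ 0 := Nat.cast_ne_zero.mpr (Nat.factorial_ne_zero i)
    have hj : (j.factorial : ℚ) ≠ 0 := Nat.cast_ne_zero.mpr (Nat.factorial_ne_zero j)
    have h2 : ((2 : ℚ) ^ j) ≠ 0 := pow_ne_zero _ two_ne_zero
    push_cast
    rw [pow_add]
    field_simp
  calc ∑ i ∈ range (n + 1), ∑ j ∈ range (n + 1),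
      ((-1 : ℚ) ^ (i + j) / (i.factorial * j.factorial * 2 ^ j)) * (Nc σ i j : ℚ)
      = (∑ i ∈ range (n + 1), (-1 : ℚ) ^ i * F.choose i) *
        (∑ j ∈ range (n + 1), (-1 : ℚ) ^ j * T.choose j) := by
        rw [Finset.sum_mul_sum]
        exact Finset.sum_congr rfl fun i _ => Finset.sum_congr rfl fun j _ => key i j
    _ = (if F = 0 then 1 else 0) * (if T = 0 then 1 else 0) := by
        rw [alt_sum_choose (fixT_card_le σ), alt_sum_choose (cycT_card_le σ)]
    _ = if (∀ x, σ x ≠ x) ∧ 2 ∉ σ.cycleType then 1 else 0 := by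
        have e1 : F = 0 ↔ ∀ x, σ x ≠ x := by
          rw [hF, Fintype.card_eq_zero_iff, isEmpty_subtype]
        have e2 : T = 0 ↔ 2 ∉ σ.cycleType := by
          rw [hT, Fintype.card_eq_zero_iff, two_mem_cycleType_iff σ, ← not_nonempty_iff]
        by_cases h1 : F = 0 <;> by_cases h2 : T = 0
        · rw [if_pos h1, if_pos h2, if_pos ⟨e1.mp h1, e2.mp h2⟩]; norm_num
        · rw [if_pos h1, if_neg h2, if_neg (fun hg => h2 (e2.mpr hg.2))]; norm_num
        · rw [if_neg h1, if_pos h2, if_neg (fun hg => h1 (e1.mpr hg.1))]; norm_num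
        · rw [if_neg h1, if_neg h2, if_neg (fun hg => h1 (e1.mpr hg.1))]; norm_num

lemma Compat.mem_range_iff {σ : Perm (Fin n)} {i j : ℕ} {f : (Fin i ⊕ Fin j × Bool) ↪ Fin n}
    (h : Compat σ f) (x : Fin n) : x ∈ Set.range f ↔ σ x ∈ Set.range f := by
  constructor
  · rintro ⟨a, rfl⟩; exact ⟨flip i j a, (h a).symm⟩
  · rintro ⟨a, ha⟩
    refine ⟨flip i j a, ?_⟩
    have := h (flip i j a)
    rw [flip_flip, ha] at this
    exact σ.injective this

noncomputable def baseInv {i j : ℕ} (f : (Fin i ⊕ Fin j × Bool) ↪ Fin n) :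
    Perm {x : Fin n // x ∈ Set.range f} :=
  (Equiv.ofInjective f f.injective).permCongr (flip i j)

lemma baseInv_apply {i j : ℕ} (f : (Fin i ⊕ Fin j × Bool) ↪ Fin n)
    (a : Fin i ⊕ Fin j × Bool) (h : f a ∈ Set.range f) :
    (baseInv f ⟨f a, h⟩ : Fin n) = f (flip i j a) := by
  simp [baseInv, Equiv.permCongr_apply]

noncomputable def compatEquiv {i j : ℕ} (f : (Fin i ⊕ Fin j × Bool) ↪ Fin n) :
    {σ : Perm (Fin n) // Compat σ f} ≃ Perm {x : Fin n // ¬ x ∈ Set.range f} where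
  toFun := fun ⟨σ, hσ⟩ => σ.subtypePerm (fun x => not_iff_not.mpr (hσ.mem_range_iff x).symm)
  invFun := fun τ => ⟨Perm.subtypeCongr (baseInv f) τ, by
    intro a
    rw [Perm.subtypeCongr.left_apply (h := ⟨a, rfl⟩)]
    exact baseInv_apply f a ⟨a, rfl⟩⟩
  left_inv := by
    rintro ⟨σ, hσ⟩
    ext x
    by_cases h : x ∈ Set.range f
    · rw [Perm.subtypeCongr.left_apply (h := h)]
      obtain ⟨a, rfl⟩ := h
      rw [baseInv_apply f a ⟨a, rfl⟩]
      exact congrArg Fin.val (hσ a).symm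
    · rw [Perm.subtypeCongr.right_apply (h := h)]
      rfl
  right_inv := by
    intro τ
    ext x
    simp only [Perm.subtypePerm_apply]
    rw [Perm.subtypeCongr.right_apply (h := x.2)]

lemma card_shape (i j : ℕ) : Fintype.card (Fin i ⊕ Fin j × Bool) = i + 2 * j := by
  simp [Fintype.card_sum, Fintype.card_prod]; ring

lemma card_compat {i j : ℕ} (f : (Fin i ⊕ Fin j × Bool) ↪ Fin n) :
    Nat.card {σ : Perm (Fin n) // Compat σ f} = (n - (i + 2 * j)).factorial := by
  rw [Nat.card_congr (compatEquiv f)]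
  rw [Nat.card_eq_fintype_card, Fintype.card_perm]
  congr 1
  rw [Fintype.card_subtype_compl]
  have : Fintype.card {x : Fin n // x ∈ Set.range f} = i + 2 * j := by
    rw [← card_shape i j]
    exact (Fintype.card_congr (Equiv.ofInjective f f.injective)).symm
  rw [this, Fintype.card_fin]


lemma claimB (i j : ℕ) :
    ∑ σ : Perm (Fin n), Nc σ i j = n.descFactorial (i + 2 * j) * (n - (i + 2 * j)).factorial := by
  have swap : ∑ σ : Perm (Fin n), Nc σ i j
      = ∑ f : (Fin i ⊕ Fin j × Bool) ↪ Fin n,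
          Fintype.card {σ : Perm (Fin n) // Compat σ f} := by
    simp only [Nc, Fintype.card_subtype, Finset.card_filter]
    rw [Finset.sum_comm]
  rw [swap]
  have hc : ∀ f : (Fin i ⊕ Fin j × Bool) ↪ Fin n,
      Fintype.card {σ : Perm (Fin n) // Compat σ f} = (n - (i + 2 * j)).factorial := fun f => by
    rw [← Nat.card_eq_fintype_card, card_compat f]
  rw [Finset.sum_congr rfl (fun f _ => hc f), Finset.sum_const, smul_eq_mul]
  congr 1
  rw [Finset.card_univ, Fintype.card_embedding_eq, card_shape, Fintype.card_fin]

lemma claimB' (i j : ℕ) :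
    ((∑ σ : Perm (Fin n), Nc σ i j : ℕ) : ℚ)
      = if i + 2 * j ≤ n then (n.factorial : ℚ) else 0 := by
  rw [claimB]
  by_cases h : i + 2 * j ≤ n
  · rw [if_pos h, ← Nat.factorial_mul_descFactorial h, Nat.mul_comm]
  · rw [if_neg h, Nat.descFactorial_of_lt (by omega), Nat.zero_mul, Nat.cast_zero]

lemma master :
    (Nat.card {σ : Perm (Fin n) // (∀ x, σ x ≠ x) ∧ 2 ∉ σ.cycleType} : ℚ)
      = ∑ i ∈ range (n + 1), ∑ j ∈ range (n + 1),
          ((-1 : ℚ) ^ (i + j) / (i.factorial * j.factorial * 2 ^ j)) *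
            (if i + 2 * j ≤ n then (n.factorial : ℚ) else 0) := by
  have lhs : (Nat.card {σ : Perm (Fin n) // (∀ x, σ x ≠ x) ∧ 2 ∉ σ.cycleType} : ℚ)
      = ∑ σ : Perm (Fin n), (if (∀ x, σ x ≠ x) ∧ 2 ∉ σ.cycleType then (1 : ℚ) else 0) := by
    rw [Nat.card_eq_fintype_card, Fintype.card_subtype, Finset.card_filter]
    push_cast
    exact Finset.sum_congr rfl fun σ _ => by split <;> norm_num
  rw [lhs]
  have := fun σ : Perm (Fin n) => (claimA σ).symm
  rw [Finset.sum_congr rfl fun σ _ => this σ]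
  rw [Finset.sum_comm]
  refine Finset.sum_congr rfl fun i _ => ?_
  rw [Finset.sum_comm]
  refine Finset.sum_congr rfl fun j _ => ?_
  rw [← Finset.mul_sum, ← claimB' i j, Nat.cast_sum]

lemma reindex :
    ∑ i ∈ range (n + 1), ∑ j ∈ range (n + 1),
      ((-1 : ℚ) ^ (i + j) / (i.factorial * j.factorial * 2 ^ j)) *
        (if i + 2 * j ≤ n then (n.factorial : ℚ) else 0)
    = (n.factorial : ℚ) * ∑ k ∈ range (n + 1), (-1 : ℚ) ^ k *
        ∑ j ∈ range (k / 2 + 1), (-1 : ℚ) ^ j /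
          ((Nat.factorial (k - 2 * j) : ℚ) * (Nat.factorial j : ℚ) * 2 ^ j) := by
  have L : ∑ i ∈ range (n + 1), ∑ j ∈ range (n + 1),
      ((-1 : ℚ) ^ (i + j) / (i.factorial * j.factorial * 2 ^ j)) *
        (if i + 2 * j ≤ n then (n.factorial : ℚ) else 0)
      = ∑ p ∈ ((range (n + 1)) ×ˢ (range (n + 1))).filter (fun p => p.1 + 2 * p.2 ≤ n),
          ((-1 : ℚ) ^ (p.1 + p.2) / (p.1.factorial * p.2.factorial * 2 ^ p.2)) *
            (n.factorial : ℚ) := by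
    rw [Finset.sum_filter, Finset.sum_product]
    refine Finset.sum_congr rfl fun i _ => Finset.sum_congr rfl fun j _ => ?_
    rw [mul_ite, mul_zero]
  have R : (n.factorial : ℚ) * ∑ k ∈ range (n + 1), (-1 : ℚ) ^ k *
        ∑ j ∈ range (k / 2 + 1), (-1 : ℚ) ^ j /
          ((Nat.factorial (k - 2 * j) : ℚ) * (Nat.factorial j : ℚ) * 2 ^ j)
      = ∑ x ∈ (range (n + 1)).sigma (fun k => range (k / 2 + 1)),
          (n.factorial : ℚ) * ((-1 : ℚ) ^ x.1 * ((-1 : ℚ) ^ x.2 /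
            ((Nat.factorial (x.1 - 2 * x.2) : ℚ) * (Nat.factorial x.2 : ℚ) * 2 ^ x.2))) := by
    calc (n.factorial : ℚ) * ∑ k ∈ range (n + 1), (-1 : ℚ) ^ k *
        ∑ j ∈ range (k / 2 + 1), (-1 : ℚ) ^ j /
          ((Nat.factorial (k - 2 * j) : ℚ) * (Nat.factorial j : ℚ) * 2 ^ j)
        = ∑ k ∈ range (n + 1), ∑ j ∈ range (k / 2 + 1),
            (n.factorial : ℚ) * ((-1 : ℚ) ^ k * ((-1 : ℚ) ^ j /
              ((Nat.factorial (k - 2 * j) : ℚ) * (Nat.factorial j : ℚ) * 2 ^ j))) := by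
          rw [Finset.mul_sum]
          refine Finset.sum_congr rfl fun k _ => ?_
          rw [Finset.mul_sum, Finset.mul_sum]
      _ = ∑ x ∈ (range (n + 1)).sigma (fun k => range (k / 2 + 1)),
          (n.factorial : ℚ) * ((-1 : ℚ) ^ x.1 * ((-1 : ℚ) ^ x.2 /
            ((Nat.factorial (x.1 - 2 * x.2) : ℚ) * (Nat.factorial x.2 : ℚ) * 2 ^ x.2))) :=
        Finset.sum_sigma' _ _ _
  rw [L, R]
  refine Finset.sum_bij' (fun p _ => (⟨p.1 + 2 * p.2, p.2⟩ : Σ _ : ℕ, ℕ))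
    (fun x _ => (x.1 - 2 * x.2, x.2)) ?_ ?_ ?_ ?_ ?_
  · rintro ⟨i, j⟩ hp
    simp only [Finset.mem_filter, Finset.mem_product, Finset.mem_range] at hp
    simp only [Finset.mem_sigma, Finset.mem_range]
    constructor
    · omega
    · have : 2 * j ≤ i + 2 * j := by omega
      omega
  · rintro ⟨k, j⟩ hx
    simp only [Finset.mem_sigma, Finset.mem_range] at hx
    have h2j : 2 * j ≤ k := by
      have := hx.2
      have := Nat.lt_succ_iff.mp hx.2
      have := Nat.div_mul_le_self k 2
      omega
    simp only [Finset.mem_filter, Finset.mem_product, Finset.mem_range]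
    omega
  · rintro ⟨i, j⟩ _
    have h : i + 2 * j - 2 * j = i := by omega
    simp [h]
  · rintro ⟨k, j⟩ hx
    simp only [Finset.mem_sigma, Finset.mem_range] at hx
    have h2j : 2 * j ≤ k := by
      have := Nat.lt_succ_iff.mp hx.2
      have := Nat.div_mul_le_self k 2
      omega
    have h : k - 2 * j + 2 * j = k := by omega
    simp [h]
  · rintro ⟨i, j⟩ hp
    simp only
    rw [show i + 2 * j - 2 * j = i from by omega]
    have hne1 : ((i.factorial : ℚ) * (j.factorial : ℚ) * 2 ^ j) ≠ 0 := by
      positivity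
    have hsign : (-1 : ℚ) ^ (i + 2 * j) = (-1 : ℚ) ^ i := by
      rw [pow_add, pow_mul, neg_one_sq, one_pow, mul_one]
    rw [hsign]
    rw [pow_add]
    ring

end LCP

/-- `numLongCyclePerms N` is the number of permutations of an `N`-element set all of
whose cycles have length at least 3 (no fixed points and no 2-cycles). -/
noncomputable def numLongCyclePerms (N : ℕ) : ℕ :=
  Nat.card {σ : Equiv.Perm (Fin N) // (∀ i, σ i ≠ i) ∧ 2 ∉ σ.cycleType}

theorem longCyclePerms_formula (N : ℕ) :
    (numLongCyclePerms N : ℚ) =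
      (Nat.factorial N : ℚ) *
        ∑ k ∈ Finset.range (N + 1), (-1 : ℚ) ^ k *
          ∑ j ∈ Finset.range (k / 2 + 1),
            (-1 : ℚ) ^ j /
              ((Nat.factorial (k - 2 * j) : ℚ) * (Nat.factorial j : ℚ) * 2 ^ j) := by
  have h := (LCP.master (n := N)).trans (LCP.reindex (n := N))
  simpa [numLongCyclePerms] using h
end

section
/- For every N ≥ 2 and every real s, the moment generating function Σ_{k≥0} e^{sk} * P_N^k / D_N is bounded above by 3 * e^{e^s/2 + 3/2}, uniformly in N. -/
/-- Number of derangements of an `N`-element set having exactly `k` 2-cycles. -/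
noncomputable def numDerangementsWithPairs (N k : ℕ) : ℕ :=
  Nat.card {σ : Equiv.Perm (Fin N) // (∀ i, σ i ≠ i) ∧ σ.cycleType.count 2 = k}

namespace MGFAux

open Equiv Equiv.Perm Finset

variable {N k : ℕ}

/-- Points lying on 2-cycles of `σ`. -/
def pairSet (σ : Perm (Fin N)) : Finset (Fin N) :=
  univ.filter fun x => σ (σ x) = x ∧ σ x ≠ x

lemma mem_pairSet {σ : Perm (Fin N)} {x : Fin N} :
    x ∈ pairSet σ ↔ σ (σ x) = x ∧ σ x ≠ x := by
  simp [pairSet]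

lemma apply_mem_pairSet {σ : Perm (Fin N)} {x : Fin N} (hx : x ∈ pairSet σ) :
    σ x ∈ pairSet σ := by
  rw [mem_pairSet] at hx ⊢
  refine ⟨congrArg σ hx.1, ?_⟩
  rw [hx.1]
  exact fun h => hx.2 h.symm

lemma pairSet_iff (σ : Perm (Fin N)) (x : Fin N) :
    x ∈ pairSet σ ↔ σ x ∈ pairSet σ := by
  constructor
  · exact apply_mem_pairSet
  · intro h
    rw [mem_pairSet] at h ⊢
    have h1 : σ (σ x) = x := σ.injective h.1
    refine ⟨h1, ?_⟩
    intro hc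
    exact h.2 (congrArg σ hc)

lemma support_cycleOf_of_pair {σ : Perm (Fin N)} {x : Fin N}
    (h1 : σ (σ x) = x) (h2 : σ x ≠ x) :
    (σ.cycleOf x).support = {x, σ x} := by
  have hxs : x ∈ σ.support := mem_support.mpr fun hc => h2 (by rw [hc])
  ext y
  rw [mem_support_cycleOf_iff]
  constructor
  · rintro ⟨hsc, -⟩
    obtain ⟨n, -, rfl⟩ := hsc.exists_pow_eq'
    have key : ∀ m : ℕ, (σ ^ m) x = x ∨ (σ ^ m) x = σ x := by
      intro m
      induction m with
      | zero => left; rfl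
      | succ m ih =>
        rw [pow_succ', Equiv.Perm.mul_apply]
        rcases ih with h | h
        · right; rw [h]
        · left; rw [h, h1]
    rcases key n with h | h <;> rw [h] <;> simp
  · intro hy
    refine ⟨?_, hxs⟩
    rcases Finset.mem_insert.mp hy with rfl | hy
    · exact Equiv.Perm.SameCycle.refl σ y
    · rw [Finset.mem_singleton] at hy
      subst hy
      exact ⟨1, by simp⟩

lemma card_support_cycleOf_of_pair {σ : Perm (Fin N)} {x : Fin N}
    (h1 : σ (σ x) = x) (h2 : σ x ≠ x) :
    (σ.cycleOf x).support.card = 2 := by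
  rw [support_cycleOf_of_pair h1 h2]
  rw [Finset.card_insert_of_notMem (by simpa using fun h => h2 h.symm), Finset.card_singleton]

lemma pairSet_eq_biUnion (σ : Perm (Fin N)) :
    pairSet σ =
      (σ.cycleFactorsFinset.filter fun c => c.support.card = 2).biUnion Equiv.Perm.support := by
  ext x
  simp only [Finset.mem_biUnion, Finset.mem_filter, mem_pairSet]
  constructor
  · rintro ⟨h1, h2⟩
    refine ⟨σ.cycleOf x, ⟨cycleOf_mem_cycleFactorsFinset_iff.mpr
      (mem_support.mpr fun hc => h2 (by rw [hc])), card_support_cycleOf_of_pair h1 h2⟩, ?_⟩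
    rw [support_cycleOf_of_pair h1 h2]
    simp
  · rintro ⟨c, ⟨hc, hc2⟩, hx⟩
    have happ : ∀ a ∈ c.support, c a = σ a := (mem_cycleFactorsFinset_iff.mp hc).2
    have hcyc : c.IsCycle := (mem_cycleFactorsFinset_iff.mp hc).1
    have horder : orderOf c = 2 := by rw [hcyc.orderOf, hc2]
    have hc2e : c * c = 1 := by
      have := pow_orderOf_eq_one c
      rwa [horder, pow_two] at this
    have hσx : σ x = c x := (happ x hx).symm
    have hx2 : c x ∈ c.support := apply_mem_support.mpr hx
    have hσcx : σ (c x) = c (c x) := (happ _ hx2).symm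
    have hccx : c (c x) = x := by
      have := congrArg (fun g => g x) hc2e
      simpa [Equiv.Perm.mul_apply] using this
    refine ⟨by rw [hσx, hσcx, hccx], by rw [hσx]; exact mem_support.mp hx⟩

lemma card_pairSet (σ : Perm (Fin N)) :
    (pairSet σ).card = 2 * σ.cycleType.count 2 := by
  classical
  rw [pairSet_eq_biUnion]
  rw [Finset.card_biUnion]
  · rw [Finset.sum_congr rfl fun c hc => (Finset.mem_filter.mp hc).2, Finset.sum_const,
      smul_eq_mul, mul_comm]
    congr 1
    rw [cycleType_def, Multiset.count_map]
    have : (Finset.filter (fun c => c.support.card = 2) σ.cycleFactorsFinset).card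
        = Multiset.card (Multiset.filter (fun c => c.support.card = 2)
            σ.cycleFactorsFinset.val) := by
      rw [Finset.card, Finset.filter_val]
    rw [this]
    congr 1
    exact Multiset.filter_congr (fun a _ => by simp [Function.comp, eq_comm])
  · intro c hc d hd hcd
    exact (σ.cycleFactorsFinset_pairwise_disjoint
      (Finset.mem_coe.mpr (Finset.filter_subset _ _ hc))
      (Finset.mem_coe.mpr (Finset.filter_subset _ _ hd)) hcd).disjoint_support

/-- Smaller elements of the 2-cycles. -/
def minSet (σ : Perm (Fin N)) : Finset (Fin N) :=
  (pairSet σ).filter fun x => x < σ x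

lemma mem_minSet {σ : Perm (Fin N)} {x : Fin N} :
    x ∈ minSet σ ↔ x ∈ pairSet σ ∧ x < σ x := Finset.mem_filter

lemma minSet_subset (σ : Perm (Fin N)) : minSet σ ⊆ pairSet σ := Finset.filter_subset _ _

lemma apply_not_mem_minSet {σ : Perm (Fin N)} {x : Fin N} (hx : x ∈ minSet σ) :
    σ x ∉ minSet σ := by
  rw [mem_minSet] at hx
  intro h
  rw [mem_minSet, (mem_pairSet.mp hx.1).1] at h
  exact absurd hx.2 (lt_asymm h.2)

lemma two_mul_card_minSet (σ : Perm (Fin N)) :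
    2 * (minSet σ).card = (pairSet σ).card := by
  classical
  have hsplit := Finset.card_filter_add_card_filter_not
    (s := pairSet σ) (p := fun x => x < σ x)
  have hbij : ((pairSet σ).filter fun x => ¬ x < σ x).card = (minSet σ).card := by
    apply Finset.card_bij (i := fun a _ => σ a)
    · intro a ha
      rw [Finset.mem_filter] at ha
      have hp := mem_pairSet.mp ha.1
      have hlt : σ a < a := lt_of_le_of_ne (not_lt.mp ha.2) hp.2
      rw [mem_minSet, hp.1]
      exact ⟨apply_mem_pairSet ha.1, hlt⟩
    · intro a ha b hb hab
      exact σ.injective hab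
    · intro b hb
      rw [mem_minSet] at hb
      have hp := mem_pairSet.mp hb.1
      refine ⟨σ b, ?_, hp.1⟩
      rw [Finset.mem_filter, hp.1]
      exact ⟨apply_mem_pairSet hb.1, not_lt.mpr (le_of_lt hb.2)⟩
  unfold minSet at *
  omega

lemma card_minSet (σ : Perm (Fin N)) :
    (minSet σ).card = σ.cycleType.count 2 := by
  have h1 := two_mul_card_minSet σ
  have h2 := card_pairSet σ
  omega

lemma pairs_disjoint {σ : Perm (Fin N)} {u v : Fin N}
    (hu : u ∈ minSet σ) (hv : v ∈ minSet σ) (huv : u ≠ v) :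
    u ≠ σ v ∧ σ u ≠ v ∧ σ u ≠ σ v := by
  have key : ∀ a b : Fin N, a ∈ minSet σ → b ∈ minSet σ → a ≠ σ b := by
    intro a b ha hb hab
    rw [mem_minSet] at ha hb
    have h1 : b < σ b := hb.2
    have h2 : a < σ a := ha.2
    rw [hab, (mem_pairSet.mp hb.1).1] at h2
    exact absurd h1 (lt_asymm h2)
  exact ⟨key u v hu hv, fun h => key v u hv hu (by rw [← h]), fun h => huv (σ.injective h)⟩

section Inj

/-- `j`-th smallest element of `minSet σ`. -/
noncomputable def theM (σ : Perm (Fin N)) (h : (minSet σ).card = k) (j : Fin k) : Fin N :=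
  ((minSet σ).orderIsoOfFin h j : Fin N)

lemma theM_mem (σ : Perm (Fin N)) (h : (minSet σ).card = k) (j : Fin k) :
    theM σ h j ∈ minSet σ := ((minSet σ).orderIsoOfFin h j).2

lemma theM_inj (σ : Perm (Fin N)) (h : (minSet σ).card = k) :
    Function.Injective (theM σ h) := fun a b hab =>
  ((minSet σ).orderIsoOfFin h).injective (Subtype.ext hab)

noncomputable def theC (σ : Perm (Fin N)) (h : (minSet σ).card = k)
    (π : Perm (Fin k)) (ε : Fin k → Bool) (q : Fin k) : Fin N :=
  if ε q then σ (theM σ h (π q)) else theM σ h (π q)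

noncomputable def theF (σ : Perm (Fin N)) (h : (minSet σ).card = k)
    (π : Perm (Fin k)) (ε : Fin k → Bool) (p : Fin k × Bool) : Fin N :=
  if p.2 then σ (theC σ h π ε p.1) else theC σ h π ε p.1

lemma theC_mem_pairSet (σ : Perm (Fin N)) (h : (minSet σ).card = k)
    (π : Perm (Fin k)) (ε : Fin k → Bool) (q : Fin k) :
    theC σ h π ε q ∈ pairSet σ := by
  unfold theC
  split
  · exact apply_mem_pairSet (minSet_subset σ (theM_mem σ h (π q)))
  · exact minSet_subset σ (theM_mem σ h (π q))

lemma theF_mem_pairSet (σ : Perm (Fin N)) (h : (minSet σ).card = k)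
    (π : Perm (Fin k)) (ε : Fin k → Bool) (p : Fin k × Bool) :
    theF σ h π ε p ∈ pairSet σ := by
  unfold theF
  split
  · exact apply_mem_pairSet (theC_mem_pairSet σ h π ε p.1)
  · exact theC_mem_pairSet σ h π ε p.1

lemma theF_mem_pair (σ : Perm (Fin N)) (h : (minSet σ).card = k)
    (π : Perm (Fin k)) (ε : Fin k → Bool) (p : Fin k × Bool) :
    theF σ h π ε p = theM σ h (π p.1) ∨ theF σ h π ε p = σ (theM σ h (π p.1)) := by
  have hm : theM σ h (π p.1) ∈ pairSet σ := minSet_subset σ (theM_mem σ h (π p.1))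
  have h2 : σ (σ (theM σ h (π p.1))) = theM σ h (π p.1) := (mem_pairSet.mp hm).1
  unfold theF theC
  rcases p with ⟨q, b⟩
  cases b <;> cases hε : ε q <;> simp [hε, h2]

lemma theF_partner (σ : Perm (Fin N)) (h : (minSet σ).card = k)
    (π : Perm (Fin k)) (ε : Fin k → Bool) (q : Fin k) (b : Bool) :
    σ (theF σ h π ε (q, b)) = theF σ h π ε (q, !b) := by
  have hc : σ (σ (theC σ h π ε q)) = theC σ h π ε q :=
    (mem_pairSet.mp (theC_mem_pairSet σ h π ε q)).1
  cases b <;> simp [theF, hc]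

lemma theF_inj (σ : Perm (Fin N)) (h : (minSet σ).card = k)
    (π : Perm (Fin k)) (ε : Fin k → Bool) :
    Function.Injective (theF σ h π ε) := by
  rintro ⟨q, b⟩ ⟨q', b'⟩ hpp
  have hq : q = q' := by
    by_contra hne
    have hπ : π q ≠ π q' := fun hc => hne (π.injective hc)
    have hM : theM σ h (π q) ≠ theM σ h (π q') := fun hc => hπ (theM_inj σ h hc)
    obtain ⟨h1, h2, h3⟩ := pairs_disjoint (theM_mem σ h (π q)) (theM_mem σ h (π q')) hM
    rcases theF_mem_pair σ h π ε (q, b) with ha | ha <;>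
      rcases theF_mem_pair σ h π ε (q', b') with hb | hb <;>
      rw [ha, hb] at hpp
    · exact hM hpp
    · exact h1 hpp
    · exact h2 hpp
    · exact h3 hpp
  subst hq
  have hb : b = b' := by
    by_contra hne
    have hbb : b' = !b := by cases b <;> cases b' <;> simp_all
    subst hbb
    rw [← theF_partner σ h π ε q b] at hpp
    exact (mem_pairSet.mp (theF_mem_pairSet σ h π ε (q, b))).2 hpp.symm
  rw [hb]

lemma theF_image (σ : Perm (Fin N)) (h : (minSet σ).card = k)
    (π : Perm (Fin k)) (ε : Fin k → Bool) :
    Finset.image (theF σ h π ε) Finset.univ = pairSet σ := by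
  apply Finset.eq_of_subset_of_card_le
  · intro x hx
    obtain ⟨p, -, rfl⟩ := Finset.mem_image.mp hx
    exact theF_mem_pairSet σ h π ε p
  · rw [Finset.card_image_of_injective _ (theF_inj σ h π ε), Finset.card_univ]
    have h1 := two_mul_card_minSet σ
    simp only [Fintype.card_prod, Fintype.card_fin, Fintype.card_bool]
    omega

/-- Restriction of σ to the complement of `S`, as a permutation of `Fin (N - 2*k)`. -/
noncomputable def restrictPerm (S : Finset (Fin N)) (σ : Perm (Fin N))
    (hiff : ∀ x, x ∈ Sᶜ ↔ σ x ∈ Sᶜ) (hC : Sᶜ.card = N - 2 * k) : Perm (Fin (N - 2 * k)) :=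
  (Equiv.permCongr (Sᶜ.orderIsoOfFin hC).toEquiv).symm (σ.subtypePerm fun x => (hiff x).symm)

lemma restrictPerm_congr {S S' : Finset (Fin N)} {σ : Perm (Fin N)} (hSS : S = S')
    (h1 : ∀ x, x ∈ Sᶜ ↔ σ x ∈ Sᶜ) (h2 : Sᶜ.card = N - 2 * k)
    (h1' : ∀ x, x ∈ S'ᶜ ↔ σ x ∈ S'ᶜ) (h2' : S'ᶜ.card = N - 2 * k) :
    restrictPerm S σ h1 h2 = restrictPerm S' σ h1' h2' := by
  subst hSS; rfl

lemma restrictPerm_inj {S : Finset (Fin N)} {σ σ' : Perm (Fin N)}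
    {h1 : ∀ x, x ∈ Sᶜ ↔ σ x ∈ Sᶜ} {h2 : Sᶜ.card = N - 2 * k}
    {h1' : ∀ x, x ∈ Sᶜ ↔ σ' x ∈ Sᶜ} {h2' : Sᶜ.card = N - 2 * k}
    (hr : restrictPerm S σ h1 h2 = restrictPerm S σ' h1' h2') :
    ∀ x ∉ S, σ x = σ' x := by
  intro x hx
  have h2e : h2' = h2 := rfl
  rw [restrictPerm, restrictPerm, h2e] at hr
  have := (Equiv.permCongr (Sᶜ.orderIsoOfFin h2).toEquiv).symm.injective hr
  have happ := congrArg (fun g => (g ⟨x, Finset.mem_compl.mpr hx⟩ : Fin N)) this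
  simpa [Equiv.Perm.subtypePerm_apply] using happ

lemma hiff_pairSet (σ : Perm (Fin N)) :
    ∀ x, x ∈ (pairSet σ)ᶜ ↔ σ x ∈ (pairSet σ)ᶜ := by
  intro x
  simp only [Finset.mem_compl]
  exact not_iff_not.mpr (pairSet_iff σ x)

lemma hC_pairSet (σ : Perm (Fin N)) (h : (minSet σ).card = k) :
    ((pairSet σ))ᶜ.card = N - 2 * k := by
  rw [Finset.card_compl, ← two_mul_card_minSet σ, h]
  simp

noncomputable def theG (σ : Perm (Fin N)) (h : (minSet σ).card = k) : Perm (Fin (N - 2 * k)) :=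
  restrictPerm (pairSet σ) σ (hiff_pairSet σ) (hC_pairSet σ h)

set_option maxHeartbeats 1000000 in
/-- the key combinatorial injection bound -/
lemma key_card (N k : ℕ) :
    Nat.card {σ : Perm (Fin N) // σ.cycleType.count 2 = k} * (2 ^ k * k.factorial)
      ≤ N.factorial := by
  classical
  rcases isEmpty_or_nonempty {σ : Perm (Fin N) // σ.cycleType.count 2 = k} with hne | hne
  · rw [Nat.card_of_isEmpty]
    simp
  obtain ⟨⟨σ₀, hσ₀⟩⟩ := hne
  have h2k : 2 * k ≤ N := by
    have h1 := card_pairSet σ₀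
    rw [hσ₀] at h1
    have h2 : (pairSet σ₀).card ≤ N := by
      simpa using Finset.card_le_card (Finset.subset_univ (pairSet σ₀))
    omega
  have hcard : ∀ σ : {σ : Perm (Fin N) // σ.cycleType.count 2 = k},
      (minSet σ.1).card = k := fun σ => (card_minSet σ.1).trans σ.2
  set B := {σ : Perm (Fin N) // σ.cycleType.count 2 = k} with hB
  let Φ : B × Perm (Fin k) × (Fin k → Bool) →
      ((Fin k × Bool) ↪ Fin N) × Perm (Fin (N - 2 * k)) :=
    fun t => (⟨theF t.1.1 (hcard t.1) t.2.1 t.2.2, theF_inj _ _ _ _⟩, theG t.1.1 (hcard t.1))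
  have hΦ : Function.Injective Φ := by
    rintro ⟨⟨σ, hσ⟩, π, ε⟩ ⟨⟨σ', hσ'⟩, π', ε'⟩ ht
    have hF : theF σ (hcard ⟨σ, hσ⟩) π ε = theF σ' (hcard ⟨σ', hσ'⟩) π' ε' :=
      congrArg (fun e => (e.1 : (Fin k × Bool) → Fin N)) ht
    have hG : theG σ (hcard ⟨σ, hσ⟩) = theG σ' (hcard ⟨σ', hσ'⟩) :=
      congrArg Prod.snd ht
    have hS : pairSet σ = pairSet σ' := by
      rw [← theF_image σ (hcard ⟨σ, hσ⟩) π ε, ← theF_image σ' (hcard ⟨σ', hσ'⟩) π' ε', hF]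
    have hσσ : σ = σ' := by
      apply Equiv.ext
      intro x
      by_cases hx : x ∈ pairSet σ
      · rw [← theF_image σ (hcard ⟨σ, hσ⟩) π ε] at hx
        obtain ⟨⟨q, b⟩, -, rfl⟩ := Finset.mem_image.mp hx
        rw [theF_partner σ (hcard ⟨σ, hσ⟩) π ε q b, hF, ← theF_partner σ' (hcard ⟨σ', hσ'⟩) π' ε' q b]
      · have hG2 : restrictPerm (pairSet σ) σ (hiff_pairSet σ) (hC_pairSet σ (hcard ⟨σ, hσ⟩))
            = restrictPerm (pairSet σ) σ'
              (by rw [hS]; exact hiff_pairSet σ')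
              (by rw [hS]; exact hC_pairSet σ' (hcard ⟨σ', hσ'⟩)) := by
          rw [theG] at hG
          rw [hG, theG]
          exact restrictPerm_congr hS.symm _ _ _ _
        exact restrictPerm_inj hG2 x hx
    subst hσσ
    have hπε : ∀ q, π q = π' q ∧ ε q = ε' q := by
      intro q
      have hc : theC σ (hcard ⟨σ, hσ⟩) π ε q = theC σ (hcard ⟨σ, hσ'⟩) π' ε' q := by
        have := congrFun hF (q, false)
        simpa [theF] using this
      have hcc : theC σ (hcard ⟨σ, hσ⟩) π ε q = theC σ (hcard ⟨σ, hσ⟩) π' ε' q := hc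
      revert hcc
      unfold theC
      rcases hε : ε q with _ | _ <;> rcases hε' : ε' q with _ | _ <;> simp <;> intro hcc
      · exact theM_inj σ _ hcc
      · exact absurd (hcc ▸ theM_mem σ (hcard ⟨σ, hσ⟩) (π q))
          (apply_not_mem_minSet (theM_mem σ (hcard ⟨σ, hσ⟩) (π' q)))
      · exact absurd (hcc.symm ▸ theM_mem σ (hcard ⟨σ, hσ⟩) (π' q))
          (apply_not_mem_minSet (theM_mem σ (hcard ⟨σ, hσ⟩) (π q)))
      · exact theM_inj σ _ hcc
    have hπ : π = π' := Equiv.ext fun q => (hπε q).1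
    have hε : ε = ε' := funext fun q => (hπε q).2
    subst hπ; subst hε
    rfl
  have hle := Nat.card_le_card_of_injective Φ hΦ
  have hlhs : Nat.card (B × Perm (Fin k) × (Fin k → Bool))
      = Nat.card B * (k.factorial * 2 ^ k) := by
    rw [Nat.card_prod, Nat.card_prod]
    congr 1
    congr 1
    · rw [Nat.card_eq_fintype_card, Fintype.card_perm, Fintype.card_fin]
    · rw [Nat.card_eq_fintype_card, Fintype.card_fun, Fintype.card_fin, Fintype.card_bool]
  have hrhs : Nat.card (((Fin k × Bool) ↪ Fin N) × Perm (Fin (N - 2 * k)))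
      = N.descFactorial (2 * k) * (N - 2 * k).factorial := by
    rw [Nat.card_prod]
    congr 1
    · rw [Nat.card_eq_fintype_card, Fintype.card_embedding_eq, Fintype.card_prod,
        Fintype.card_fin, Fintype.card_fin, Fintype.card_bool, Nat.mul_comm k 2]
    · rw [Nat.card_eq_fintype_card, Fintype.card_perm, Fintype.card_fin]
  rw [hlhs, hrhs] at hle
  calc Nat.card B * (2 ^ k * k.factorial) = Nat.card B * (k.factorial * 2 ^ k) := by ring
    _ ≤ N.descFactorial (2 * k) * (N - 2 * k).factorial := hle
    _ = N.factorial := by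
        rw [mul_comm]
        exact Nat.factorial_mul_descFactorial h2k

end Inj

lemma pairs_le (N k : ℕ) :
    numDerangementsWithPairs N k * (2 ^ k * k.factorial) ≤ N.factorial := by
  refine le_trans (Nat.mul_le_mul_right _ ?_) (key_card N k)
  refine Nat.card_le_card_of_injective (fun σ => ⟨σ.1, σ.2.2⟩) ?_
  intro a b hab
  simp only [Subtype.mk.injEq] at hab
  exact Subtype.ext hab

lemma pairs_eq_zero {N k : ℕ} (hkN : N < 2 * k) : numDerangementsWithPairs N k = 0 := by
  rw [numDerangementsWithPairs, Nat.card_eq_zero]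
  left
  constructor
  rintro ⟨σ, -, hσ⟩
  have h1 := card_pairSet σ
  rw [hσ] at h1
  have h2 : (pairSet σ).card ≤ N := by
    simpa using Finset.card_le_card (Finset.subset_univ (pairSet σ))
  omega

lemma numDerangementsOf_eq (N : ℕ) : numDerangementsOf N = numDerangements N := by
  rw [numDerangementsOf, Nat.card_eq_fintype_card]
  have h := card_derangements_eq_numDerangements (Fin N)
  rw [Fintype.card_fin] at h
  rw [← h]
  exact Fintype.card_congr (Equiv.subtypeEquivRight fun f => Iff.rfl)

lemma three_mul_numDerangements {N : ℕ} (hN : 2 ≤ N) :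
    N.factorial ≤ 3 * numDerangements N := by
  obtain ⟨m, rfl⟩ : ∃ m, N = m + 2 := ⟨N - 2, by omega⟩
  clear hN
  have d2 : numDerangements 2 = 1 := by
    rw [show (2 : ℕ) = 0 + 2 from rfl, numDerangements_add_two]
    simp [numDerangements_zero, numDerangements_one]
  have d3 : numDerangements 3 = 2 := by
    rw [show (3 : ℕ) = 1 + 2 from rfl, numDerangements_add_two, d2, numDerangements_one]
  induction m using Nat.twoStepInduction with
  | zero => rw [d2]; decide
  | one =>
    show Nat.factorial 3 ≤ 3 * numDerangements 3
    rw [d3]; decide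
  | more n ih1 ih2 =>
    have hrec := numDerangements_add_two (n + 2)
    have hf2 : (n + 2 + 2).factorial = (n + 2 + 2) * (n + 2 + 1) * (n + 2).factorial := by
      rw [Nat.factorial_succ, Nat.factorial_succ]; ring
    have hf3 : (n + 2 + 1).factorial = (n + 2 + 1) * (n + 2).factorial := Nat.factorial_succ _
    rw [hrec, hf2]
    rw [hf3] at ih2
    nlinarith [ih1, ih2, Nat.factorial_pos (n + 2)]

lemma derangements_lower (N : ℕ) (hN : 2 ≤ N) :
    N.factorial ≤ 3 * numDerangementsOf N := by
  rw [numDerangementsOf_eq]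
  exact three_mul_numDerangements hN

end MGFAux

theorem mgf_number_of_pairs_bounded (N : ℕ) (hN : 2 ≤ N) (s : ℝ) :
    ∑' k : ℕ,
        Real.exp (s * k) * (numDerangementsWithPairs N k : ℝ) /
          (numDerangementsOf N : ℝ) ≤
      3 * Real.exp (Real.exp s / 2 + 3 / 2) := by
  have hD1 : N.factorial ≤ 3 * numDerangementsOf N := MGFAux.derangements_lower N hN
  have hDpos : 0 < numDerangementsOf N := by
    have := Nat.factorial_pos N
    omega
  have hD0 : (0 : ℝ) < (numDerangementsOf N : ℝ) := by exact_mod_cast hDpos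
  have hzero : ∀ k ∉ Finset.range (N + 1),
      Real.exp (s * k) * (numDerangementsWithPairs N k : ℝ) / (numDerangementsOf N : ℝ) = 0 := by
    intro k hk
    rw [Finset.mem_range, not_lt] at hk
    have : numDerangementsWithPairs N k = 0 := MGFAux.pairs_eq_zero (by omega)
    rw [this]
    simp
  rw [tsum_eq_sum hzero]
  have hterm : ∀ k ∈ Finset.range (N + 1),
      Real.exp (s * k) * (numDerangementsWithPairs N k : ℝ) / (numDerangementsOf N : ℝ) ≤
        3 * (Real.exp s / 2) ^ k / (k.factorial : ℝ) := by
    intro k _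
    have hP : (numDerangementsWithPairs N k : ℝ) * (2 ^ k * (k.factorial : ℝ)) ≤
        3 * (numDerangementsOf N : ℝ) := by
      have h1 : numDerangementsWithPairs N k * (2 ^ k * k.factorial) ≤ 3 * numDerangementsOf N :=
        le_trans (MGFAux.pairs_le N k) hD1
      exact_mod_cast h1
    have hfac : (0 : ℝ) < (k.factorial : ℝ) := by exact_mod_cast k.factorial_pos
    have h2k : (0 : ℝ) < (2 : ℝ) ^ k := by positivity
    have hPD : (numDerangementsWithPairs N k : ℝ) / (numDerangementsOf N : ℝ) ≤
        3 / (2 ^ k * (k.factorial : ℝ)) := by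
      rw [div_le_div_iff₀ hD0 (by positivity)]
      linarith [hP]
    have hexp : Real.exp (s * k) = (Real.exp s) ^ k := by
      rw [mul_comm, Real.exp_nat_mul]
    rw [hexp, mul_div_assoc]
    have hb : (Real.exp s) ^ k * ((numDerangementsWithPairs N k : ℝ) / (numDerangementsOf N : ℝ))
        ≤ (Real.exp s) ^ k * (3 / (2 ^ k * (k.factorial : ℝ))) :=
      mul_le_mul_of_nonneg_left hPD (by positivity)
    refine le_trans hb (le_of_eq ?_)
    rw [div_pow]
    field_simp
  refine le_trans (Finset.sum_le_sum hterm) ?_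
  have hsum : ∑ k ∈ Finset.range (N + 1), 3 * (Real.exp s / 2) ^ k / (k.factorial : ℝ)
      = 3 * ∑ k ∈ Finset.range (N + 1), (Real.exp s / 2) ^ k / (k.factorial : ℝ) := by
    rw [Finset.mul_sum]
    exact Finset.sum_congr rfl fun k _ => by ring
  rw [hsum]
  have hle1 : ∑ k ∈ Finset.range (N + 1), (Real.exp s / 2) ^ k / (k.factorial : ℝ)
      ≤ Real.exp (Real.exp s / 2) :=
    Real.sum_le_exp_of_nonneg (by positivity) (N + 1)
  have hle2 : Real.exp (Real.exp s / 2) ≤ Real.exp (Real.exp s / 2 + 3 / 2) := by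
    apply Real.exp_le_exp.mpr
    linarith
  linarith
end
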